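/- arXiv:2005.07372 — 12 statements merged into one kernel-verified Lean document; each statement's English description precedes it below -/
import Mathlib

section
/- For every real number ρ with 0 ≤ ρ < 1, the inequality (1 - 3ρ + 2ρ^{n+1})·n + 3ρ^{n+1} ≥ 3ρ holds for all integers n ≥ 1 if and only if ρ ≤ 1/5. -/
theorem stmt_0 (ρ : ℝ) (h0 : 0 ≤ ρ) (h1 : ρ < 1) :
    (∀ n : ℕ, 1 ≤ n → (1 - 3*ρ + 2*ρ^(n+1)) * n + 3*ρ^(n+1) ≥ 3*ρ) ↔ ρ ≤ 1/5 := by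
  constructor
  · intro h
    have h1' := h 1 le_rfl
    push_cast at h1'
    nlinarith [h1', sq_nonneg ρ]
  · intro hρ n hn
    have hp : (0:ℝ) ≤ ρ^(n+1) := pow_nonneg h0 _
    rcases eq_or_lt_of_le hn with h1' | h2
    · subst h1'
      push_cast
      nlinarith [sq_nonneg ρ, sq_nonneg (1-ρ)]
    · have hn2 : (2:ℝ) ≤ n := by exact_mod_cast h2
      nlinarith [hp, hn2]
end

section
/- Let a ∈ [-1, 1). The linear system M₂ x = v, where M₂ is the 3×3 matrix with entries M₂(i,j) = ∫_{-1}^{1} t^{i+j} dt for 0 ≤ i,j ≤ 2 and v has entries v_j = (1 - a^{j+1})/(j+1) for j = 0,1,2, has unique solution x₀ = (1/8)(1-a)(4-5a-5a²), x₁ = (3/4)(1-a²), x₂ = (15/8)a(1-a²); moreover all three components are strictly positive if and only if 0 < a < (√105 - 5)/10. -/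
open intervalIntegral

set_option maxHeartbeats 1000000 in
theorem stmt_1 (a : ℝ) (ha1 : -1 ≤ a) (ha2 : a < 1)
    (M : Matrix (Fin 3) (Fin 3) ℝ)
    (hM : ∀ i j : Fin 3, M i j = ∫ t in (-1:ℝ)..1, t ^ ((i:ℕ) + (j:ℕ)))
    (v : Fin 3 → ℝ)
    (hv : ∀ j : Fin 3, v j = (1 - a ^ ((j:ℕ) + 1)) / ((j:ℕ) + 1)) :
    M.mulVec ![(1/8) * (1-a) * (4 - 5*a - 5*a^2), (3/4) * (1 - a^2), (15/8) * a * (1 - a^2)] = v ∧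
    (∀ x : Fin 3 → ℝ, M.mulVec x = v →
      x = ![(1/8) * (1-a) * (4 - 5*a - 5*a^2), (3/4) * (1 - a^2), (15/8) * a * (1 - a^2)]) ∧
    ((∀ i : Fin 3,
        0 < ![(1/8) * (1-a) * (4 - 5*a - 5*a^2), (3/4) * (1 - a^2), (15/8) * a * (1 - a^2)] i) ↔
      (0 < a ∧ a < (Real.sqrt 105 - 5) / 10)) := by
  have hM' : ∀ i j : Fin 3, M i j =
      (1 - (-1:ℝ) ^ ((i:ℕ) + (j:ℕ) + 1)) / ((i:ℕ) + (j:ℕ) + 1) := by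
    intro i j
    rw [hM, integral_pow]
    push_cast
    norm_num
  have e00 := hM' 0 0; have e01 := hM' 0 1; have e02 := hM' 0 2
  have e10 := hM' 1 0; have e11 := hM' 1 1; have e12 := hM' 1 2
  have e20 := hM' 2 0; have e21 := hM' 2 1; have e22 := hM' 2 2
  norm_num at e00 e01 e02 e10 e11 e12 e20 e21 e22
  have hv0 := hv 0; have hv1 := hv 1; have hv2 := hv 2
  norm_num at hv0 hv1 hv2
  have hs : Real.sqrt 105 ^ 2 = 105 := Real.sq_sqrt (by norm_num)
  have hsp : (0:ℝ) < Real.sqrt 105 := Real.sqrt_pos.mpr (by norm_num)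
  have h5 : (5:ℝ) < Real.sqrt 105 := by nlinarith [hs, hsp]
  refine ⟨?_, ?_, ?_⟩
  · funext j
    fin_cases j <;>
      simp [Matrix.mulVec, dotProduct, Fin.sum_univ_three, e00, e01, e02,
        e10, e11, e12, e20, e21, e22, hv0, hv1, hv2] <;> ring
  · intro x hx
    have h0 := congrFun hx 0
    have h1 := congrFun hx 1
    have h2 := congrFun hx 2
    simp [Matrix.mulVec, dotProduct, Fin.sum_univ_three, e00, e01, e02,
      e10, e11, e12, e20, e21, e22, hv0, hv1, hv2] at h0 h1 h2
    funext j
    fin_cases j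
    · show x 0 = (1/8) * (1-a) * (4 - 5*a - 5*a^2)
      linear_combination (9/8) * h0 - (15/8) * h2
    · show x 1 = (3/4) * (1 - a^2)
      linear_combination (3/2) * h1
    · show x 2 = (15/8) * a * (1 - a^2)
      linear_combination -(15/8) * h0 + (45/8) * h2
  · constructor
    · intro h
      have p0 := h 0
      have p1 := h 1
      have p2 := h 2
      simp only [Matrix.cons_val_zero, Matrix.cons_val_one, Matrix.head_cons,
        Matrix.cons_val_two, Matrix.tail_cons] at p0 p1 p2
      have ha2' : 0 < 1 - a ^ 2 := by nlinarith
      have hapos : 0 < a := by nlinarith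
      refine ⟨hapos, ?_⟩
      have h4 : 0 < 4 - 5*a - 5*a^2 := by
        by_contra h
        push_neg at h
        nlinarith [mul_nonneg (by linarith : (0:ℝ) ≤ 1 - a)
          (by linarith : (0:ℝ) ≤ -(4 - 5*a - 5*a^2))]
      by_contra hcon
      push_neg at hcon
      have hr0 : (0:ℝ) ≤ (Real.sqrt 105 - 5)/10 := by linarith
      nlinarith [hs,
        mul_nonneg hr0 (by linarith : (0:ℝ) ≤ a - (Real.sqrt 105 - 5)/10),
        mul_nonneg (le_of_lt hapos) (by linarith : (0:ℝ) ≤ a - (Real.sqrt 105 - 5)/10)]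
    · rintro ⟨hp, hr⟩
      intro i
      have ha2' : 0 < 1 - a ^ 2 := by nlinarith
      have h4 : 0 < 4 - 5*a - 5*a^2 := by
        nlinarith [hs, mul_pos (by linarith : (0:ℝ) < (Real.sqrt 105 - 5)/10 - a)
          (by linarith : (0:ℝ) < (Real.sqrt 105 - 5)/10 + a + 1)]
      fin_cases i
      · show (0:ℝ) < 1/8 * (1-a) * (4 - 5*a - 5*a^2)
        nlinarith [mul_pos (by linarith : (0:ℝ) < 1 - a) h4]
      · show (0:ℝ) < 3/4 * (1 - a^2)
        linarith
      · show (0:ℝ) < 15/8 * a * (1 - a^2)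
        nlinarith [mul_pos hp ha2']
end

section
/- Let a ∈ [-1, 1). The unique solution z = (z₀,z₁,z₂,z₃) of the linear system M₃ z = w, where M₃ is the 4×4 Gram matrix with entries ∫_{-1}^{1} t^{i+j} dt (0 ≤ i,j ≤ 3) and w_j = (1-a^{j+1})/(j+1), is z₀ = (1/8)(1-a)(4-5a-5a²), z₁ = (15/32)(1-a²)(3-7a²), z₂ = (15/8)a(1-a²), z₃ = (35/32)(1-a²)(5a²-1); all four components are strictly positive if and only if 1/√5 < a < (√105 - 5)/10. -/
open intervalIntegral

private lemma aux_fwd1 {a : ℝ} (hpos : 0 < a) (h : 1 < 5 * a ^ 2) : 1 / Real.sqrt 5 < a := by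
  have h5 : Real.sqrt 5 ^ 2 = 5 := Real.sq_sqrt (by norm_num)
  have h5pos : 0 < Real.sqrt 5 := Real.sqrt_pos.mpr (by norm_num)
  rw [div_lt_iff₀ h5pos]
  nlinarith [sq_nonneg (a * Real.sqrt 5 - 1)]

private lemma aux_fwd2 {a : ℝ} (hpos : 0 < a) (h : 0 < 4 - 5 * a - 5 * a ^ 2) :
    a < (Real.sqrt 105 - 5) / 10 := by
  have hb2 : Real.sqrt 105 ^ 2 = 105 := Real.sq_sqrt (by norm_num)
  have hbn : 0 ≤ Real.sqrt 105 := Real.sqrt_nonneg 105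
  have hsqlt : (10 * a + 5) ^ 2 < Real.sqrt 105 ^ 2 := by nlinarith
  nlinarith [hsqlt, hbn]

private lemma aux_bwd1 {a : ℝ} (hl : 1 / Real.sqrt 5 < a) : 0 < a ∧ 1 < 5 * a ^ 2 := by
  have h5 : Real.sqrt 5 ^ 2 = 5 := Real.sq_sqrt (by norm_num)
  have h5pos : 0 < Real.sqrt 5 := Real.sqrt_pos.mpr (by norm_num)
  have hpos : 0 < a := lt_trans (by positivity) hl
  rw [div_lt_iff₀ h5pos] at hl
  exact ⟨hpos, by nlinarith⟩

private lemma aux_bwd2 {a : ℝ} (hpos : 0 < a) (hr : a < (Real.sqrt 105 - 5) / 10) :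
    0 < 4 - 5 * a - 5 * a ^ 2 ∧ a < 1 ∧ 0 < 3 - 7 * a ^ 2 := by
  have hb2 : Real.sqrt 105 ^ 2 = 105 := Real.sq_sqrt (by norm_num)
  have hbn : 0 ≤ Real.sqrt 105 := Real.sqrt_nonneg 105
  have hb10 : 10 < Real.sqrt 105 := by nlinarith
  have h105 : 10 * a + 5 < Real.sqrt 105 := by linarith
  have hq : (10 * a + 5) ^ 2 < 105 := by nlinarith
  exact ⟨by nlinarith, by nlinarith, by nlinarith⟩


theorem stmt_2 (a : ℝ) (ha1 : -1 ≤ a) (ha2 : a < 1)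
    (M : Matrix (Fin 4) (Fin 4) ℝ)
    (hM : ∀ i j : Fin 4, M i j = ∫ t in (-1:ℝ)..1, t ^ ((i:ℕ) + (j:ℕ)))
    (w : Fin 4 → ℝ)
    (hw : ∀ j : Fin 4, w j = (1 - a ^ ((j:ℕ) + 1)) / ((j:ℕ) + 1)) :
    M.mulVec ![(1/8) * (1-a) * (4 - 5*a - 5*a^2), (15/32) * (1 - a^2) * (3 - 7*a^2),
        (15/8) * a * (1 - a^2), (35/32) * (1 - a^2) * (5*a^2 - 1)] = w ∧
    (∀ z : Fin 4 → ℝ, M.mulVec z = w →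
      z = ![(1/8) * (1-a) * (4 - 5*a - 5*a^2), (15/32) * (1 - a^2) * (3 - 7*a^2),
        (15/8) * a * (1 - a^2), (35/32) * (1 - a^2) * (5*a^2 - 1)]) ∧
    ((∀ i : Fin 4,
        0 < ![(1/8) * (1-a) * (4 - 5*a - 5*a^2), (15/32) * (1 - a^2) * (3 - 7*a^2),
          (15/8) * a * (1 - a^2), (35/32) * (1 - a^2) * (5*a^2 - 1)] i) ↔
      (1 / Real.sqrt 5 < a ∧ a < (Real.sqrt 105 - 5) / 10)) := by
  have e3 : ((3:Fin 4):ℕ) = 3 := rfl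
  have hM' : ∀ i j : Fin 4, M i j =
      !![(2:ℝ),0,2/3,0; 0,2/3,0,2/5; 2/3,0,2/5,0; 0,2/5,0,2/7] i j := by
    intro i j
    fin_cases i <;> fin_cases j <;>
      norm_num [hM, integral_pow, e3]
  have hw0 := hw 0; have hw1 := hw 1; have hw2 := hw 2; have hw3 := hw 3
  norm_num [e3] at hw0 hw1 hw2 hw3
  have h5 : Real.sqrt 5 ^ 2 = 5 := Real.sq_sqrt (by norm_num)
  have h5pos : 0 < Real.sqrt 5 := Real.sqrt_pos.mpr (by norm_num)
  have hb2 : Real.sqrt 105 ^ 2 = 105 := Real.sq_sqrt (by norm_num)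
  have hbn : 0 ≤ Real.sqrt 105 := Real.sqrt_nonneg 105
  have hb10 : 10 < Real.sqrt 105 := by nlinarith
  refine ⟨?_, ?_, ?_⟩
  · funext j
    fin_cases j <;>
      simp [Matrix.mulVec, dotProduct, Fin.sum_univ_four, hM' 0, hM' 1, hM' 2, hM' 3,
        hw0, hw1, hw2, hw3] <;> ring
  · intro z hz
    have h0 := congrFun hz 0
    have h1 := congrFun hz 1
    have h2 := congrFun hz 2
    have h3 := congrFun hz 3
    simp [Matrix.mulVec, dotProduct, Fin.sum_univ_four, hM' 0, hM' 1, hM' 2, hM' 3,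
      hw0, hw1, hw2, hw3] at h0 h1 h2 h3
    funext i
    fin_cases i <;> simp
    · linear_combination (9/8) * h0 - (15/8) * h2
    · linear_combination (75/8) * h1 - (105/8) * h3
    · linear_combination (-15/8) * h0 + (45/8) * h2
    · linear_combination (-105/8) * h1 + (175/8) * h3
  · constructor
    · intro h
      have p0 := h 0; have p1 := h 1; have p2 := h 2; have p3 := h 3
      simp only [Matrix.cons_val_zero, Matrix.cons_val_one, Matrix.head_cons,
        Matrix.cons_val_two, Matrix.tail_cons, Matrix.cons_val_three] at p0 p1 p2 p3
      have h40 : 0 < 4 - 5*a - 5*a^2 := by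
        rcases mul_pos_iff.mp p0 with ⟨hx, hy⟩ | ⟨hx, hy⟩
        · exact hy
        · nlinarith
      have h5a : 0 < 5 * a^2 - 1 := by
        rcases mul_pos_iff.mp p3 with ⟨hx, hy⟩ | ⟨hx, hy⟩
        · exact hy
        · nlinarith
      have hsq : 0 < 1 - a^2 := by
        rcases mul_pos_iff.mp p3 with ⟨hx, hy⟩ | ⟨hx, hy⟩
        · linarith
        · nlinarith
      have hapos : 0 < a := by
        rcases mul_pos_iff.mp p2 with ⟨hx, hy⟩ | ⟨hx, hy⟩
        · linarith
        · linarith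
      exact ⟨aux_fwd1 hapos (by linarith), aux_fwd2 hapos h40⟩
    · rintro ⟨hl, hr⟩
      obtain ⟨hapos, ha2'⟩ := aux_bwd1 hl
      obtain ⟨h40, ha1', h37⟩ := aux_bwd2 hapos hr
      have hsq : 0 < 1 - a^2 := by nlinarith
      clear hM hw hM' hw0 hw1 hw2 hw3 h5 h5pos hb2 hbn hb10 hl hr e3
      intro i
      fin_cases i <;> simp only [Matrix.cons_val_zero, Matrix.cons_val_one, Matrix.head_cons,
        Matrix.cons_val_two, Matrix.tail_cons, Matrix.cons_val_three, Fin.isValue]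
      · exact mul_pos (mul_pos (by norm_num) (by linarith : (0:ℝ) < 1 - a)) (by linarith)
      · exact mul_pos (mul_pos (by norm_num) hsq) (by linarith)
      · exact mul_pos (mul_pos (by norm_num) hapos) hsq
      · exact mul_pos (mul_pos (by norm_num) hsq) (by linarith)
end

section
/- Suppose 1/√5 < a < (√105 - 5)/10. Then for every integer n ≥ 2 the inequality (3a - 5a³ + 2a^{2n+1})·n + 3a^{2n+1} - 3a ≥ 0 holds. -/
theorem stmt_3 (a : ℝ) (ha1 : 1 / Real.sqrt 5 < a) (ha2 : a < (Real.sqrt 105 - 5) / 10) :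
    ∀ n : ℕ, 2 ≤ n → (3*a - 5*a^3 + 2*a^(2*n+1)) * n + 3*a^(2*n+1) - 3*a ≥ 0 := by
  have ha0 : 0 < a := lt_trans (by positivity) ha1
  have h105 : Real.sqrt 105 < 10.3 := by
    rw [show (10.3:ℝ) = Real.sqrt (10.3^2) by rw [Real.sqrt_sq]; norm_num]
    exact Real.sqrt_lt_sqrt (by norm_num) (by norm_num)
  have hub : a < 0.53 := by linarith
  have hsq : a^2 < 3/10 := by nlinarith
  intro n hn
  have hN : (2:ℝ) ≤ (n:ℝ) := by exact_mod_cast hn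
  have hpow : a^(2*n+1) = a^(2*n) * a := pow_succ a (2*n)
  have hpos : 0 ≤ a^(2*n) := by positivity
  have key : (3*a - 5*a^3 + 2*a^(2*n+1)) * n + 3*a^(2*n+1) - 3*a
      = a * ((3 - 5*a^2)*(n:ℝ) - 3 + (2*(n:ℝ)+3)*a^(2*n)) := by
    rw [hpow]; ring
  rw [key]
  have hX : 0 ≤ (3 - 5*a^2)*(n:ℝ) - 3 + (2*(n:ℝ)+3)*a^(2*n) := by nlinarith
  positivity
end

section
/- Suppose 1/√5 < a < (√105 - 5)/10. Then for every integer n ≥ 2 the inequality (-3 + 30a² - 35a⁴ + 8a^{2n+2})·n² + (3 - 35a⁴ + 32a^{2n+2})·n + 30a^{2n+2} - 30a² ≥ 0 holds. -/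
theorem stmt_4 (a : ℝ) (ha1 : 1 / Real.sqrt 5 < a) (ha2 : a < (Real.sqrt 105 - 5) / 10) :
    ∀ n : ℕ, 2 ≤ n →
      (-3 + 30*a^2 - 35*a^4 + 8*a^(2*n+2)) * (n:ℝ)^2 + (3 - 35*a^4 + 32*a^(2*n+2)) * n
        + 30*a^(2*n+2) - 30*a^2 ≥ 0 := by
  have hs5 : (0:ℝ) < Real.sqrt 5 := Real.sqrt_pos.mpr (by norm_num)
  have ha0 : 0 < a := lt_trans (by positivity) ha1
  have hb1 : 1/5 < a^2 := by
    have h := pow_lt_pow_left₀ ha1 (by positivity) (two_ne_zero)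
    rwa [div_pow, one_pow, Real.sq_sqrt (by norm_num : (5:ℝ) ≥ 0)] at h
  have hsq105 : Real.sqrt 105 < 10.25 := by
    rw [show (10.25:ℝ) = Real.sqrt (10.25^2) by rw [Real.sqrt_sq (by norm_num)]]
    exact Real.sqrt_lt_sqrt (by norm_num) (by norm_num)
  have hub : a < 0.525 := by linarith
  have hb2 : a^2 < 0.275625 := by nlinarith
  have hg : 0 ≤ -35*a^4 + 30*a^2 - 3 := by nlinarith [sq_nonneg (a^2 - 1/5)]
  have hL : 0 ≤ 3 - 35*a^4 := by nlinarith
  have hK : 0 ≤ -210*a^4 + 90*a^2 - 6 := by nlinarith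
  intro n hn
  have hm : (2:ℝ) ≤ (n:ℝ) := by exact_mod_cast hn
  have hc : 0 ≤ a^(2*n+2) := by positivity
  nlinarith [mul_nonneg hg (by nlinarith : (0:ℝ) ≤ (n:ℝ)^2 - 4),
    mul_nonneg hL (by linarith : (0:ℝ) ≤ (n:ℝ) - 2),
    mul_nonneg hc (by nlinarith : (0:ℝ) ≤ 8*(n:ℝ)^2 + 32*(n:ℝ) + 30)]
end

section
/- For all natural numbers m and k and all α ∈ [0, 2), the quantity 2·(a_m/(2m+2k+1) + b_m/(2m+2k+3) - 1/(2m+2k+α+1)) is nonnegative, where a_m = ((4m+1)(4m+3))/((4m+1+α)(4m+3+α)) · (2-α)/2 and b_m = ((4m+3)(4m+5))/((4m+1+α)(4m+3+α)) · α/2. Equivalently, after clearing positive denominators, this quantity equals 2α(2-α)·((2k-2m-1)² - 1)/((4m+1+α)(4m+3+α)(2m+2k+1)(2m+2k+3)(2m+2k+α+1)) ≥ 0. -/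
theorem stmt_5 (m k : ℕ) (α : ℝ) (hα0 : 0 ≤ α) (hα2 : α < 2) :
    0 ≤ 2 * (((4*(m:ℝ)+1)*(4*m+3)) / ((4*m+1+α)*(4*m+3+α)) * ((2-α)/2) / (2*m+2*k+1)
          + ((4*(m:ℝ)+3)*(4*m+5)) / ((4*m+1+α)*(4*m+3+α)) * (α/2) / (2*m+2*k+3)
          - 1 / (2*m+2*k+α+1)) ∧
    2 * (((4*(m:ℝ)+1)*(4*m+3)) / ((4*m+1+α)*(4*m+3+α)) * ((2-α)/2) / (2*m+2*k+1)
          + ((4*(m:ℝ)+3)*(4*m+5)) / ((4*m+1+α)*(4*m+3+α)) * (α/2) / (2*m+2*k+3)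
          - 1 / (2*m+2*k+α+1))
      = 2*α*(2-α) * ((2*(k:ℝ)-2*m-1)^2 - 1)
        / ((4*m+1+α)*(4*m+3+α)*(2*m+2*k+1)*(2*m+2*k+3)*(2*m+2*k+α+1)) := by
  have hm : (0:ℝ) ≤ (m:ℝ) := Nat.cast_nonneg m
  have hk : (0:ℝ) ≤ (k:ℝ) := Nat.cast_nonneg k
  have h1 : (0:ℝ) < 4*(m:ℝ)+1+α := by linarith
  have h2 : (0:ℝ) < 4*(m:ℝ)+3+α := by linarith
  have h3 : (0:ℝ) < 2*(m:ℝ)+2*k+1 := by linarith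
  have h4 : (0:ℝ) < 2*(m:ℝ)+2*k+3 := by linarith
  have h5 : (0:ℝ) < 2*(m:ℝ)+2*k+α+1 := by linarith
  have heq : 2 * (((4*(m:ℝ)+1)*(4*m+3)) / ((4*m+1+α)*(4*m+3+α)) * ((2-α)/2) / (2*m+2*k+1)
          + ((4*(m:ℝ)+3)*(4*m+5)) / ((4*m+1+α)*(4*m+3+α)) * (α/2) / (2*m+2*k+3)
          - 1 / (2*m+2*k+α+1))
      = 2*α*(2-α) * ((2*(k:ℝ)-2*m-1)^2 - 1)
        / ((4*m+1+α)*(4*m+3+α)*(2*m+2*k+1)*(2*m+2*k+3)*(2*m+2*k+α+1)) := by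
    field_simp
    ring
  have hsq : (1:ℝ) ≤ (2*(k:ℝ)-2*m-1)^2 := by
    rcases le_or_gt (m+1) k with h | h
    · have : (m:ℝ) + 1 ≤ (k:ℝ) := by exact_mod_cast h
      nlinarith
    · have : (k:ℝ) ≤ (m:ℝ) := by exact_mod_cast Nat.lt_succ_iff.mp h
      nlinarith
  have hnn : 0 ≤ 2*α*(2-α) * ((2*(k:ℝ)-2*m-1)^2 - 1)
        / ((4*m+1+α)*(4*m+3+α)*(2*m+2*k+1)*(2*m+2*k+3)*(2*m+2*k+α+1)) := by
    apply div_nonneg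
    · have h6 : (0:ℝ) ≤ 2 - α := by linarith
      have h7 : (0:ℝ) ≤ (2*(k:ℝ)-2*m-1)^2 - 1 := by linarith
      have := mul_nonneg (mul_nonneg (mul_nonneg (by norm_num : (0:ℝ) ≤ 2) hα0) h6) h7
      linarith
    · positivity
  exact ⟨heq ▸ hnn, heq⟩
end

section
/- Let m ∈ ℕ and α ∈ [0,2). In L²([-1,1]) with Lebesgue measure, the L² distance between the function t ↦ |t|^{2m+α} and the polynomial a_m t^{2m} + b_m t^{2m+2}, where a_m = ((4m+1)(4m+3))/((4m+1+α)(4m+3+α))·(2-α)/2 and b_m = ((4m+3)(4m+5))/((4m+1+α)(4m+3+α))·α/2, equals √2·α(2-α) / ((4m+α+1)(4m+α+3)√(4m+2α+1)). -/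
open intervalIntegral Real MeasureTheory

lemma absint (p : ℝ) (hp : 0 ≤ p) : ∫ t in (-1:ℝ)..1, |t| ^ p = 2 / (p + 1) := by
  have hcont : Continuous (fun t : ℝ => |t| ^ p) :=
    (Real.continuous_rpow_const hp).comp continuous_abs
  have hI : ∀ a b : ℝ, IntervalIntegrable (fun t : ℝ => |t| ^ p) volume a b :=
    fun a b => hcont.intervalIntegrable a b
  have hsplit := intervalIntegral.integral_add_adjacent_intervals (a := (-1:ℝ)) (b := 0)
    (c := 1) (hI _ _) (hI _ _)
  have hneg : (∫ t in (0:ℝ)..1, |t| ^ p) = ∫ t in (-1:ℝ)..0, |t| ^ p := by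
    have := intervalIntegral.integral_comp_neg (a := (0:ℝ)) (b := 1)
      (fun t : ℝ => |t| ^ p)
    simpa [abs_neg] using this
  have hval : (∫ t in (0:ℝ)..1, |t| ^ p) = 1 / (p + 1) := by
    rw [intervalIntegral.integral_congr (g := fun t : ℝ => t ^ p)
      (fun t ht => by
        rw [Set.uIcc_of_le (by norm_num : (0:ℝ) ≤ 1)] at ht
        simp [abs_of_nonneg ht.1])]
    rw [integral_rpow (Or.inl (by linarith))]
    rw [Real.one_rpow, Real.zero_rpow (by linarith)]
    ring
  have : (∫ t in (-1:ℝ)..1, |t| ^ p)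
      = (∫ t in (-1:ℝ)..0, |t| ^ p) + ∫ t in (0:ℝ)..1, |t| ^ p := hsplit.symm
  rw [this, ← hneg, hval]; ring

lemma expand (m : ℕ) (α A B : ℝ) (hα : 0 ≤ α) (t : ℝ) :
    (|t| ^ (2*(m:ℝ) + α) - (A * t ^ (2*m) + B * t ^ (2*m+2)))^2
      = |t| ^ (4*(m:ℝ) + 2*α) - 2*A * |t| ^ (4*(m:ℝ) + α) - 2*B * |t| ^ (4*(m:ℝ) + α + 2)
        + A^2 * |t| ^ (4*(m:ℝ)) + 2*A*B * |t| ^ (4*(m:ℝ) + 2) + B^2 * |t| ^ (4*(m:ℝ) + 4) := by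
  have hx : (0:ℝ) ≤ |t| := abs_nonneg t
  have h1 : t ^ (2*m) = |t| ^ (2*(m:ℝ)) := by
    rw [← (even_two_mul m).pow_abs t, ← Real.rpow_natCast |t| (2*m)]
    push_cast; ring_nf
  have h2 : t ^ (2*m+2) = |t| ^ (2*(m:ℝ) + 2) := by
    rw [← (by exact ⟨m+1, by ring⟩ : Even (2*m+2)).pow_abs t, ← Real.rpow_natCast |t| (2*m+2)]
    push_cast; ring_nf
  have hm : (0:ℝ) ≤ 2*(m:ℝ) := by positivity
  have hma : (0:ℝ) ≤ 2*(m:ℝ) + α := by positivity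
  have hm2 : (0:ℝ) ≤ 2*(m:ℝ) + 2 := by positivity
  rw [h1, h2,
    show (4*(m:ℝ) + 2*α) = (2*(m:ℝ)+α) + (2*(m:ℝ)+α) by ring,
    show (4*(m:ℝ) + α + 2) = (2*(m:ℝ)+α) + (2*(m:ℝ)+2) by ring,
    show (4*(m:ℝ) + α) = (2*(m:ℝ)+α) + (2*(m:ℝ)) by ring,
    show (4*(m:ℝ) + 4) = (2*(m:ℝ)+2) + (2*(m:ℝ)+2) by ring,
    show (4*(m:ℝ) + 2) = (2*(m:ℝ)) + (2*(m:ℝ)+2) by ring,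
    show (4*(m:ℝ)) = (2*(m:ℝ)) + (2*(m:ℝ)) by ring,
    Real.rpow_add_of_nonneg hx hma hma, Real.rpow_add_of_nonneg hx hma hm,
    Real.rpow_add_of_nonneg hx hma hm2, Real.rpow_add_of_nonneg hx hm hm,
    Real.rpow_add_of_nonneg hx hm hm2, Real.rpow_add_of_nonneg hx hm2 hm2]
  ring

set_option maxHeartbeats 2000000 in
theorem stmt_6 (m : ℕ) (α : ℝ) (hα0 : 0 ≤ α) (hα2 : α < 2) :
    Real.sqrt (∫ t in (-1:ℝ)..1,
        (|t| ^ (2*(m:ℝ) + α)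
          - (((4*(m:ℝ)+1)*(4*m+3)) / ((4*m+1+α)*(4*m+3+α)) * ((2-α)/2) * t ^ (2*m)
             + ((4*(m:ℝ)+3)*(4*m+5)) / ((4*m+1+α)*(4*m+3+α)) * (α/2) * t ^ (2*m+2)))^2)
      = Real.sqrt 2 * α * (2 - α)
        / ((4*m+α+1) * (4*m+α+3) * Real.sqrt (4*m+2*α+1)) := by
  set A : ℝ := ((4*(m:ℝ)+1)*(4*m+3)) / ((4*m+1+α)*(4*m+3+α)) * ((2-α)/2) with hA
  set B : ℝ := ((4*(m:ℝ)+3)*(4*m+5)) / ((4*m+1+α)*(4*m+3+α)) * (α/2) with hB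
  have hcongr : (∫ t in (-1:ℝ)..1,
      (|t| ^ (2*(m:ℝ) + α) - (A * t ^ (2*m) + B * t ^ (2*m+2)))^2)
    = ∫ t in (-1:ℝ)..1,
        (|t| ^ (4*(m:ℝ) + 2*α) - 2*A * |t| ^ (4*(m:ℝ) + α) - 2*B * |t| ^ (4*(m:ℝ) + α + 2)
        + A^2 * |t| ^ (4*(m:ℝ)) + 2*A*B * |t| ^ (4*(m:ℝ) + 2) + B^2 * |t| ^ (4*(m:ℝ) + 4)) :=
    intervalIntegral.integral_congr (fun t _ => expand m α A B hα0 t)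
  have hInt : ∀ s : ℝ, 0 ≤ s →
      IntervalIntegrable (fun t : ℝ => |t| ^ s) volume (-1) 1 := fun s hs =>
    ((Real.continuous_rpow_const hs).comp continuous_abs).intervalIntegrable _ _
  have i1 := hInt (4*(m:ℝ) + 2*α) (by positivity)
  have i2 := (hInt (4*(m:ℝ) + α) (by positivity)).const_mul (2*A)
  have i3 := (hInt (4*(m:ℝ) + α + 2) (by positivity)).const_mul (2*B)
  have i4 := (hInt (4*(m:ℝ)) (by positivity)).const_mul (A^2)
  have i5 := (hInt (4*(m:ℝ) + 2) (by positivity)).const_mul (2*A*B)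
  have i6 := (hInt (4*(m:ℝ) + 4) (by positivity)).const_mul (B^2)
  rw [hcongr]
  rw [intervalIntegral.integral_add (((i1.sub i2).sub i3).add i4 |>.add i5) i6,
      intervalIntegral.integral_add ((i1.sub i2).sub i3 |>.add i4) i5,
      intervalIntegral.integral_add ((i1.sub i2).sub i3) i4,
      intervalIntegral.integral_sub (i1.sub i2) i3,
      intervalIntegral.integral_sub i1 i2,
      intervalIntegral.integral_const_mul, intervalIntegral.integral_const_mul,
      intervalIntegral.integral_const_mul, intervalIntegral.integral_const_mul,
      intervalIntegral.integral_const_mul,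
      absint _ (by positivity), absint _ (by positivity), absint _ (by positivity),
      absint _ (by positivity), absint _ (by positivity), absint _ (by positivity)]
  have hd1 : (0:ℝ) < 4*m+1 := by positivity
  have hd3 : (0:ℝ) < 4*m+3 := by positivity
  have hd5 : (0:ℝ) < 4*m+5 := by positivity
  have hD1 : (0:ℝ) < 4*m+α+1 := by positivity
  have hD3 : (0:ℝ) < 4*m+α+3 := by positivity
  have hS : (0:ℝ) < 4*m+2*α+1 := by positivity
  have hE : 2 / (4*(m:ℝ) + 2*α + 1) - 2*A * (2 / (4*(m:ℝ) + α + 1))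
      - 2*B * (2 / (4*(m:ℝ) + α + 2 + 1)) + A^2 * (2 / (4*(m:ℝ) + 1))
      + 2*A*B * (2 / (4*(m:ℝ) + 2 + 1)) + B^2 * (2 / (4*(m:ℝ) + 4 + 1))
      = (Real.sqrt 2 * α * (2 - α)
        / ((4*m+α+1) * (4*m+α+3) * Real.sqrt (4*m+2*α+1)))^2 := by
    have key : (Real.sqrt 2 * α * (2 - α)
        / ((4*(m:ℝ)+α+1) * (4*m+α+3) * Real.sqrt (4*m+2*α+1)))^2
        = 2*α^2*(2-α)^2 / ((4*(m:ℝ)+α+1)^2 * (4*m+α+3)^2 * (4*m+2*α+1)) := by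
      have t2 : Real.sqrt 2 ^ 2 = 2 := Real.sq_sqrt (by norm_num)
      have tS : Real.sqrt (4*(m:ℝ)+2*α+1) ^ 2 = 4*(m:ℝ)+2*α+1 := Real.sq_sqrt hS.le
      rw [div_pow, mul_pow, mul_pow, mul_pow, mul_pow, t2, tS]
    rw [key, hA, hB]
    have hα1 : (0:ℝ) < 4*m+1+α := by positivity
    have hα3 : (0:ℝ) < 4*m+3+α := by positivity
    have e1 : (4*(m:ℝ)+α+2+1) ≠ 0 := by positivity
    have e2 : (4*(m:ℝ)+2+1) ≠ 0 := by positivity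
    have e3 : (4*(m:ℝ)+4+1) ≠ 0 := by positivity
    field_simp
    ring
  rw [hE, Real.sqrt_sq]
  apply div_nonneg
  · have : (0:ℝ) ≤ 2 - α := by linarith
    positivity
  · positivity
end

section
/- Let m ∈ ℕ and α ∈ [0,2). For all natural numbers k ≥ 0, the inequality c_m/(2m+2k+3) + d_m/(2m+2k+5) ≥ 1/(2m+2k+α+3) holds, where c_m = ((4m+3)(4m+5))/((4m+3+α)(4m+5+α))·(2-α)/2 and d_m = ((4m+5)(4m+7))/((4m+3+α)(4m+5+α))·α/2. -/
theorem stmt_8 (m k : ℕ) (α : ℝ) (hα0 : 0 ≤ α) (hα2 : α < 2) :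
    ((4*(m:ℝ)+3)*(4*m+5)) / ((4*m+3+α)*(4*m+5+α)) * ((2-α)/2) / (2*m+2*k+3)
      + ((4*(m:ℝ)+5)*(4*m+7)) / ((4*m+3+α)*(4*m+5+α)) * (α/2) / (2*m+2*k+5)
      ≥ 1 / (2*m+2*k+α+3) := by
  have hm : (0:ℝ) ≤ (m:ℝ) := Nat.cast_nonneg m
  have hk : (0:ℝ) ≤ (k:ℝ) := Nat.cast_nonneg k
  have h1 : (0:ℝ) < 4*m+3+α := by linarith
  have h2 : (0:ℝ) < 4*m+5+α := by linarith
  have h3 : (0:ℝ) < 2*(m:ℝ)+2*k+3 := by linarith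
  have h4 : (0:ℝ) < 2*(m:ℝ)+2*k+5 := by linarith
  have h5 : (0:ℝ) < 2*(m:ℝ)+2*k+α+3 := by linarith
  have hmk : (0:ℝ) ≤ ((m:ℝ)-k)*((m:ℝ)-k+1) := by
    rcases le_or_gt k m with h | h
    · have : (k:ℝ) ≤ m := by exact_mod_cast h
      nlinarith
    · have : (m:ℝ)+1 ≤ k := by exact_mod_cast h
      nlinarith
  have key : (0:ℝ) ≤ α*(2-α)*(((m:ℝ)-k)*((m:ℝ)-k+1)) := by
    apply mul_nonneg (mul_nonneg hα0 (by linarith)) hmk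
  rw [ge_iff_le, ← sub_nonneg]
  have expand : ((4*(m:ℝ)+3)*(4*m+5)) / ((4*m+3+α)*(4*m+5+α)) * ((2-α)/2) / (2*m+2*k+3)
      + ((4*(m:ℝ)+5)*(4*m+7)) / ((4*m+3+α)*(4*m+5+α)) * (α/2) / (2*m+2*k+5)
      - 1 / (2*m+2*k+α+3)
      = 8*(α*(2-α)*(((m:ℝ)-k)*((m:ℝ)-k+1)))
        / (2*((4*m+3+α)*(4*m+5+α))*(2*m+2*k+3)*(2*m+2*k+5)*(2*m+2*k+α+3)) := by
    field_simp
    ring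
  rw [expand]
  positivity
end

section
/- Let m ∈ ℕ and α ∈ [0,2). The L²([-1,1]) distance between the signed power function f(t) = sgn(t)·|t|^{2m+1+α} and the polynomial c_m t^{2m+1} + d_m t^{2m+3}, where c_m = ((4m+3)(4m+5))/((4m+3+α)(4m+5+α))·(2-α)/2 and d_m = ((4m+5)(4m+7))/((4m+3+α)(4m+5+α))·α/2, equals √2·α(2-α) / ((4m+α+3)(4m+α+5)√(4m+2α+3)). -/
open intervalIntegral

lemma abs_rpow_int (s : ℝ) (hs : 0 ≤ s) :
    ∫ t in (-1:ℝ)..1, |t| ^ s = 2 / (s + 1) := by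
  have hcont : Continuous fun t : ℝ => |t| ^ s :=
    continuous_abs.rpow_const fun x => Or.inr hs
  have h1 : ∫ t in (0:ℝ)..1, |t| ^ s = 1 / (s + 1) := by
    rw [intervalIntegral.integral_congr (g := fun t : ℝ => t ^ s)
      (fun t ht => by
        simp only [Set.uIcc_of_le (by norm_num : (0:ℝ) ≤ 1)] at ht
        simp [abs_of_nonneg ht.1])]
    rw [integral_rpow (Or.inl (by linarith))]
    simp [Real.one_rpow, Real.zero_rpow (by linarith : s + 1 ≠ 0)]
  have h2 : ∫ t in (-1:ℝ)..0, |t| ^ s = 1 / (s + 1) := by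
    have hc : (∫ x in (0:ℝ)..1, (fun t : ℝ => |t| ^ s) (-x)) = ∫ x in (-1:ℝ)..(-0:ℝ), |x| ^ s :=
      intervalIntegral.integral_comp_neg (fun t : ℝ => |t| ^ s)
    simp only [abs_neg, neg_zero] at hc
    rw [← hc, h1]
  rw [← intervalIntegral.integral_add_adjacent_intervals
    (hcont.intervalIntegrable (-1) 0) (hcont.intervalIntegrable 0 1), h1, h2]
  ring

lemma keypos (m : ℕ) (α c d u : ℝ) (hu : 0 < u) :
    (u ^ (2*(m:ℝ) + 1 + α) - (c * u ^ (2*m+1) + d * u ^ (2*m+3)))^2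
      = u ^ (4*(m:ℝ) + 2 + 2*α) - 2*c * u ^ (4*(m:ℝ) + 2 + α) - 2*d * u ^ (4*(m:ℝ) + 4 + α)
        + c^2 * u ^ (4*m+2) + 2*c*d * u ^ (4*m+4) + d^2 * u ^ (4*m+6) := by
  have e1 : u ^ (4*(m:ℝ) + 2 + 2*α) = u ^ (2*(m:ℝ) + 1 + α) * u ^ (2*(m:ℝ) + 1 + α) := by
    rw [← Real.rpow_add hu]; congr 1; ring
  have e2 : u ^ (4*(m:ℝ) + 2 + α) = u ^ (2*(m:ℝ) + 1 + α) * u ^ (2*m+1) := by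
    rw [← Real.rpow_natCast u (2*m+1), ← Real.rpow_add hu]; congr 1; push_cast; ring
  have e3 : u ^ (4*(m:ℝ) + 4 + α) = u ^ (2*(m:ℝ) + 1 + α) * u ^ (2*m+3) := by
    rw [← Real.rpow_natCast u (2*m+3), ← Real.rpow_add hu]; congr 1; push_cast; ring
  rw [e1, e2, e3]; ring

lemma key (m : ℕ) (α : ℝ) (hα : 0 ≤ α) (c d : ℝ) (t : ℝ) :
    (Real.sign t * |t| ^ (2*(m:ℝ) + 1 + α) - (c * t ^ (2*m+1) + d * t ^ (2*m+3)))^2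
      = |t| ^ (4*(m:ℝ) + 2 + 2*α) - 2*c * |t| ^ (4*(m:ℝ) + 2 + α) - 2*d * |t| ^ (4*(m:ℝ) + 4 + α)
        + c^2 * t ^ (4*m+2) + 2*c*d * t ^ (4*m+4) + d^2 * t ^ (4*m+6) := by
  rcases lt_trichotomy t 0 with ht | ht | ht
  · have hu : 0 < -t := by linarith
    have habs : |t| = -t := abs_of_neg ht
    have hsign : Real.sign t = -1 := Real.sign_of_neg ht
    have h := keypos m α c d (-t) hu
    rw [hsign, habs]
    have o1 : (-t) ^ (2*m+1) = -t ^ (2*m+1) := Odd.neg_pow ⟨m, by ring⟩ t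
    have o3 : (-t) ^ (2*m+3) = -t ^ (2*m+3) := Odd.neg_pow ⟨m+1, by ring⟩ t
    have e2 : (-t) ^ (4*m+2) = t ^ (4*m+2) := Even.neg_pow ⟨2*m+1, by ring⟩ t
    have e4 : (-t) ^ (4*m+4) = t ^ (4*m+4) := Even.neg_pow ⟨2*m+2, by ring⟩ t
    have e6 : (-t) ^ (4*m+6) = t ^ (4*m+6) := Even.neg_pow ⟨2*m+3, by ring⟩ t
    rw [o1, o3, e2, e4, e6] at h
    linear_combination h
  · subst ht
    have z : ∀ s : ℝ, 0 < s → (0:ℝ) ^ s = 0 := fun s hs => Real.zero_rpow (ne_of_gt hs)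
    have hm : (0:ℝ) ≤ (m:ℝ) := Nat.cast_nonneg m
    simp [Real.sign_zero, z _ (by linarith : (0:ℝ) < 4*(m:ℝ) + 2 + 2*α),
      z _ (by linarith : (0:ℝ) < 4*(m:ℝ) + 2 + α), z _ (by linarith : (0:ℝ) < 4*(m:ℝ) + 4 + α),
      z _ (by linarith : (0:ℝ) < 2*(m:ℝ) + 1 + α)]
  · rw [Real.sign_of_pos ht, abs_of_pos ht, one_mul]
    exact keypos m α c d t ht

open intervalIntegral in
lemma intval (m : ℕ) (α : ℝ) (hα : 0 ≤ α) (c d : ℝ) :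
    ∫ t in (-1:ℝ)..1,
      (Real.sign t * |t| ^ (2*(m:ℝ)+1+α) - (c * t ^ (2*m+1) + d * t ^ (2*m+3)))^2
      = 2/(4*(m:ℝ)+3+2*α) - 4*c/(4*(m:ℝ)+3+α) - 4*d/(4*(m:ℝ)+5+α)
        + 2*c^2/(4*(m:ℝ)+3) + 4*c*d/(4*(m:ℝ)+5) + 2*d^2/(4*(m:ℝ)+7) := by
  have hm : (0:ℝ) ≤ (m:ℝ) := Nat.cast_nonneg m
  rw [intervalIntegral.integral_congr (g := fun t =>
      |t| ^ (4*(m:ℝ) + 2 + 2*α) - 2*c * |t| ^ (4*(m:ℝ) + 2 + α) - 2*d * |t| ^ (4*(m:ℝ) + 4 + α)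
        + c^2 * t ^ (4*m+2) + 2*c*d * t ^ (4*m+4) + d^2 * t ^ (4*m+6))
      (fun t _ => key m α hα c d t)]
  have habs : ∀ s : ℝ, 0 ≤ s →
      IntervalIntegrable (fun t : ℝ => |t| ^ s) MeasureTheory.volume (-1) 1 :=
    fun s hs => (continuous_abs.rpow_const fun x => Or.inr hs).intervalIntegrable _ _
  have I1 := habs (4*(m:ℝ) + 2 + 2*α) (by linarith)
  have I2 := (habs (4*(m:ℝ) + 2 + α) (by linarith)).const_mul (2*c)
  have I3 := (habs (4*(m:ℝ) + 4 + α) (by linarith)).const_mul (2*d)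
  have hpow : ∀ n : ℕ, IntervalIntegrable (fun t : ℝ => t ^ n) MeasureTheory.volume (-1) 1 :=
    fun n => (continuous_pow n).intervalIntegrable _ _
  have I4 := (hpow (4*m+2)).const_mul (c^2)
  have I5 := (hpow (4*m+4)).const_mul (2*c*d)
  have I6 := (hpow (4*m+6)).const_mul (d^2)
  rw [integral_add ((((I1.sub I2).sub I3).add I4).add I5) I6,
      integral_add (((I1.sub I2).sub I3).add I4) I5,
      integral_add ((I1.sub I2).sub I3) I4,
      integral_sub (I1.sub I2) I3, integral_sub I1 I2,
      integral_const_mul, integral_const_mul, integral_const_mul, integral_const_mul,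
      integral_const_mul,
      abs_rpow_int _ (by linarith : (0:ℝ) ≤ 4*(m:ℝ) + 2 + 2*α),
      abs_rpow_int _ (by linarith : (0:ℝ) ≤ 4*(m:ℝ) + 2 + α),
      abs_rpow_int _ (by linarith : (0:ℝ) ≤ 4*(m:ℝ) + 4 + α),
      integral_pow, integral_pow, integral_pow,
      Odd.neg_one_pow (n := 4*m+2+1) ⟨2*m+1, by ring⟩,
      Odd.neg_one_pow (n := 4*m+4+1) ⟨2*m+2, by ring⟩,
      Odd.neg_one_pow (n := 4*m+6+1) ⟨2*m+3, by ring⟩]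
  have d1 : (4*(m:ℝ) + 2 + 2*α) + 1 ≠ 0 := by linarith
  have d2 : (4*(m:ℝ) + 2 + α) + 1 ≠ 0 := by linarith
  have d3 : (4*(m:ℝ) + 4 + α) + 1 ≠ 0 := by linarith
  have d4 : ((4*m+2+1 : ℕ) : ℝ) ≠ 0 := by positivity
  have d5 : ((4*m+4+1 : ℕ) : ℝ) ≠ 0 := by positivity
  have d6 : ((4*m+6+1 : ℕ) : ℝ) ≠ 0 := by positivity
  have e1 : 4*(m:ℝ)+3+2*α ≠ 0 := by linarith
  have e2 : 4*(m:ℝ)+3+α ≠ 0 := by linarith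
  have e3 : 4*(m:ℝ)+5+α ≠ 0 := by linarith
  have e4 : 4*(m:ℝ)+3 ≠ 0 := by linarith
  have e5 : 4*(m:ℝ)+5 ≠ 0 := by linarith
  have e6 : 4*(m:ℝ)+7 ≠ 0 := by linarith
  push_cast
  field_simp
  ring

set_option maxHeartbeats 2000000 in
theorem stmt_9 (m : ℕ) (α : ℝ) (hα0 : 0 ≤ α) (hα2 : α < 2) :
    Real.sqrt (∫ t in (-1:ℝ)..1,
        (Real.sign t * |t| ^ (2*(m:ℝ) + 1 + α)
          - (((4*(m:ℝ)+3)*(4*m+5)) / ((4*m+3+α)*(4*m+5+α)) * ((2-α)/2) * t ^ (2*m+1)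
             + ((4*(m:ℝ)+5)*(4*m+7)) / ((4*m+3+α)*(4*m+5+α)) * (α/2) * t ^ (2*m+3)))^2)
      = Real.sqrt 2 * α * (2 - α)
        / ((4*m+α+3) * (4*m+α+5) * Real.sqrt (4*m+2*α+3)) := by
  have hm : (0:ℝ) ≤ (m:ℝ) := Nat.cast_nonneg m
  rw [intval m α hα0 (((4*(m:ℝ)+3)*(4*m+5)) / ((4*m+3+α)*(4*m+5+α)) * ((2-α)/2))
      (((4*(m:ℝ)+5)*(4*m+7)) / ((4*m+3+α)*(4*m+5+α)) * (α/2))]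
  have e1 : 4*(m:ℝ)+3+2*α ≠ 0 := by linarith
  have e2 : 4*(m:ℝ)+3+α ≠ 0 := by linarith
  have e3 : 4*(m:ℝ)+5+α ≠ 0 := by linarith
  have e4 : 4*(m:ℝ)+3 ≠ 0 := by linarith
  have e5 : 4*(m:ℝ)+5 ≠ 0 := by linarith
  have e6 : 4*(m:ℝ)+7 ≠ 0 := by linarith
  have hC : (0:ℝ) < 4*(m:ℝ)+2*α+3 := by linarith
  have hIv : 2/(4*(m:ℝ)+3+2*α)
        - 4*(((4*(m:ℝ)+3)*(4*m+5)) / ((4*m+3+α)*(4*m+5+α)) * ((2-α)/2))/(4*(m:ℝ)+3+α)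
        - 4*(((4*(m:ℝ)+5)*(4*m+7)) / ((4*m+3+α)*(4*m+5+α)) * (α/2))/(4*(m:ℝ)+5+α)
        + 2*(((4*(m:ℝ)+3)*(4*m+5)) / ((4*m+3+α)*(4*m+5+α)) * ((2-α)/2))^2/(4*(m:ℝ)+3)
        + 4*(((4*(m:ℝ)+3)*(4*m+5)) / ((4*m+3+α)*(4*m+5+α)) * ((2-α)/2))
            *(((4*(m:ℝ)+5)*(4*m+7)) / ((4*m+3+α)*(4*m+5+α)) * (α/2))/(4*(m:ℝ)+5)
        + 2*(((4*(m:ℝ)+5)*(4*m+7)) / ((4*m+3+α)*(4*m+5+α)) * (α/2))^2/(4*(m:ℝ)+7)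
      = 2*α^2*(2-α)^2 / ((4*(m:ℝ)+α+3)^2*(4*(m:ℝ)+α+5)^2*(4*(m:ℝ)+2*α+3)) := by
    have e7 : 4*(m:ℝ)+α+3 ≠ 0 := by linarith
    have e8 : 4*(m:ℝ)+α+5 ≠ 0 := by linarith
    field_simp
    ring
  rw [hIv]
  have hR : 0 ≤ Real.sqrt 2 * α * (2 - α)
      / ((4*(m:ℝ)+α+3) * (4*m+α+5) * Real.sqrt (4*m+2*α+3)) := by
    apply div_nonneg
    · exact mul_nonneg (mul_nonneg (Real.sqrt_nonneg 2) hα0) (by linarith)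
    · exact mul_nonneg (mul_nonneg (by linarith) (by linarith)) (Real.sqrt_nonneg _)
  have hsq : (Real.sqrt 2 * α * (2 - α)
      / ((4*(m:ℝ)+α+3) * (4*m+α+5) * Real.sqrt (4*m+2*α+3)))^2
      = 2*α^2*(2-α)^2 / ((4*(m:ℝ)+α+3)^2*(4*(m:ℝ)+α+5)^2*(4*(m:ℝ)+2*α+3)) := by
    rw [div_pow, mul_pow, mul_pow, mul_pow, mul_pow,
      Real.sq_sqrt (by norm_num : (0:ℝ) ≤ 2),
      Real.sq_sqrt (le_of_lt hC)]

  rw [← hsq, Real.sqrt_sq hR]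
end

section
/- Let A = (a_{ij}) be an n×n real symmetric positive definite matrix. Then for any c = (c₁,…,cₙ) ∈ ℝⁿ there exists a unique subset S ⊆ {1,…,n} and a unique vector x ∈ ℝ^S such that: x_i > 0 for all i ∈ S; Σ_{j∈S} a_{ij} x_j = c_i for all i ∈ S; and Σ_{j∈S} a_{ij} x_j ≥ c_i for all i ∈ {1,…,n}. -/
open Matrix in
lemma Qeq {n : ℕ} (A : Matrix (Fin n) (Fin n) ℝ) (x : Fin n → ℝ) :
    x ⬝ᵥ (A *ᵥ x) = ∑ i, x i * ∑ j, A i j * x j := by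
  simp [dotProduct, Matrix.mulVec]

open Matrix in
lemma Qexpand {n : ℕ} (A : Matrix (Fin n) (Fin n) ℝ) (hsym : ∀ i j, A i j = A j i)
    (x : Fin n → ℝ) (t : ℝ) (i : Fin n) :
    (x + Pi.single i t) ⬝ᵥ (A *ᵥ (x + Pi.single i t)) =
      x ⬝ᵥ (A *ᵥ x) + 2 * t * (∑ j, A i j * x j) + t ^ 2 * A i i := by
  have hms : A *ᵥ Pi.single i t = fun j => A j i * t := by
    ext j; simp [Matrix.mulVec, dotProduct_single]
  rw [Matrix.mulVec_add, dotProduct_add, add_dotProduct,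
    add_dotProduct, hms, single_dotProduct,
    single_dotProduct]
  have h1 : x ⬝ᵥ (fun j => A j i * t) = t * ∑ j, A i j * x j := by
    simp only [dotProduct]
    rw [Finset.mul_sum]
    exact Finset.sum_congr rfl fun j _ => by rw [hsym i j]; ring
  have h2 : (A *ᵥ x) i = ∑ j, A i j * x j := by simp [Matrix.mulVec, dotProduct]
  rw [h1, h2]
  ring

open Matrix in
lemma Qsmul {n : ℕ} (A : Matrix (Fin n) (Fin n) ℝ) (a : ℝ) (x : Fin n → ℝ) :
    (a • x) ⬝ᵥ (A *ᵥ (a • x)) = a ^ 2 * (x ⬝ᵥ (A *ᵥ x)) := by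
  simp only [Qeq, Finset.mul_sum, Pi.smul_apply, smul_eq_mul]
  refine Finset.sum_congr rfl fun i _ => ?_
  refine Finset.sum_congr rfl fun j _ => by ring

open Matrix in
lemma Qcont {n : ℕ} (A : Matrix (Fin n) (Fin n) ℝ) :
    Continuous fun x : Fin n → ℝ => x ⬝ᵥ (A *ᵥ x) := by
  simp only [Qeq]
  exact continuous_finset_sum _ fun i _ => (continuous_apply i).mul
    (continuous_finset_sum _ fun j _ => continuous_const.mul (continuous_apply j))

open Matrix in
lemma Qpos {n : ℕ} {A : Matrix (Fin n) (Fin n) ℝ} (hA : A.PosDef) {x : Fin n → ℝ}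
    (hx : x ≠ 0) : 0 < x ⬝ᵥ (A *ᵥ x) := by
  have := hA.dotProduct_mulVec_pos hx
  simpa using this

open Matrix in
lemma Qbound {n : ℕ} {A : Matrix (Fin n) (Fin n) ℝ} (hA : A.PosDef) :
    ∃ m > 0, ∀ x : Fin n → ℝ, m * (∑ i, x i ^ 2) ≤ x ⬝ᵥ (A *ᵥ x) := by
  rcases Nat.eq_zero_or_pos n with hn | hn
  · subst hn
    exact ⟨1, one_pos, fun x => by simp [dotProduct]⟩
  · set Sph : Set (Fin n → ℝ) := {x | ∑ i, x i ^ 2 = 1} with hSph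
    have hclosed : IsClosed Sph :=
      isClosed_eq (continuous_finset_sum _ fun i _ => (continuous_apply i).pow 2)
        continuous_const
    have hbdd : Bornology.IsBounded Sph := by
      apply Bornology.IsBounded.subset (Metric.isBounded_closedBall (x := (0 : Fin n → ℝ)) (r := 1))
      intro x hx
      simp only [Metric.mem_closedBall, dist_zero_right]
      rw [pi_norm_le_iff_of_nonneg zero_le_one]
      intro i
      have h1 : x i ^ 2 ≤ 1 := by
        rw [← hx]
        exact Finset.single_le_sum (f := fun i => x i ^ 2) (fun j _ => sq_nonneg _)
          (Finset.mem_univ i)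
      rw [Real.norm_eq_abs, ← abs_one]
      exact abs_le_abs (by nlinarith [abs_nonneg (x i), le_abs_self (x i)]) (by nlinarith [abs_nonneg (x i), neg_abs_le (x i)])
    have hne : Sph.Nonempty := by
      refine ⟨Pi.single ⟨0, hn⟩ 1, ?_⟩
      simp only [hSph, Set.mem_setOf_eq]
      rw [Finset.sum_eq_single ⟨0, hn⟩]
      · simp
      · intro b _ hb; simp [Pi.single_apply, hb]
      · simp
    obtain ⟨x₀, hx₀S, hx₀min⟩ := (Metric.isCompact_of_isClosed_isBounded hclosed hbdd).exists_isMinOn hne (Qcont A).continuousOn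
    have hx₀ne : x₀ ≠ 0 := by
      intro h
      rw [hSph] at hx₀S
      simp [h] at hx₀S
    refine ⟨x₀ ⬝ᵥ (A *ᵥ x₀), Qpos hA hx₀ne, fun x => ?_⟩
    by_cases hx : x = 0
    · simp [hx, dotProduct]
    · have hs : 0 < ∑ i, x i ^ 2 := by
        rcases Function.ne_iff.mp hx with ⟨i, hi⟩
        have : 0 < x i ^ 2 := lt_of_le_of_ne (sq_nonneg _) (Ne.symm (pow_ne_zero 2 hi))
        exact lt_of_lt_of_le this (Finset.single_le_sum (f := fun i => x i ^ 2)
          (fun j _ => sq_nonneg _) (Finset.mem_univ i))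
      set r : ℝ := Real.sqrt (∑ i, x i ^ 2) with hr
      have hrpos : 0 < r := Real.sqrt_pos.mpr hs
      have hr2 : r ^ 2 = ∑ i, x i ^ 2 := Real.sq_sqrt hs.le
      have hy : (r⁻¹ • x) ∈ Sph := by
        simp only [hSph, Set.mem_setOf_eq, Pi.smul_apply, smul_eq_mul, mul_pow]
        rw [← Finset.mul_sum, ← hr2]
        field_simp
      have h2 : x₀ ⬝ᵥ (A *ᵥ x₀) ≤ (r⁻¹ • x) ⬝ᵥ (A *ᵥ (r⁻¹ • x)) := hx₀min hy
      rw [Qsmul] at h2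
      calc x₀ ⬝ᵥ (A *ᵥ x₀) * (∑ i, x i ^ 2)
          ≤ (r⁻¹ ^ 2 * (x ⬝ᵥ (A *ᵥ x))) * (∑ i, x i ^ 2) := by
            exact mul_le_mul_of_nonneg_right h2 hs.le
        _ = x ⬝ᵥ (A *ᵥ x) := by
            rw [← hr2]; field_simp


lemma key1 {a g t : ℝ} (ha : 0 < a) (hg : g < 0) (ht : t = -g / a) :
    t * g + t ^ 2 * a / 2 < 0 := by
  have h2 : t * g + t ^ 2 * a / 2 = -(g ^ 2 / a) / 2 := by
    rw [ht]; field_simp; ring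

  have h3 : 0 < g ^ 2 / a := div_pos (by nlinarith) ha
  rw [h2]; linarith

lemma key2 {a g t : ℝ} (ha : 0 < a) (hg : 0 < g) (htneg : t < 0) (hta : -t * a ≤ g) :
    t * g + t ^ 2 * a / 2 < 0 := by
  nlinarith [mul_le_mul_of_nonneg_left hta (neg_nonneg.mpr htneg.le)]

theorem stmt_13 (n : ℕ) (A : Matrix (Fin n) (Fin n) ℝ) (hA : A.PosDef) (c : Fin n → ℝ) :
    ∃! p : Set (Fin n) × (Fin n → ℝ),
      (∀ i, i ∉ p.1 → p.2 i = 0) ∧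
      (∀ i ∈ p.1, 0 < p.2 i) ∧
      (∀ i ∈ p.1, ∑ j, A i j * p.2 j = c i) ∧
      (∀ i, c i ≤ ∑ j, A i j * p.2 j) := by
  classical
  obtain ⟨m, hm, hmB⟩ := Qbound hA
  have hsym : ∀ i j, A i j = A j i := by
    intro i j
    have h := hA.1.apply j i
    exact h
  set f : (Fin n → ℝ) → ℝ := fun x => dotProduct x (A.mulVec x) / 2 - dotProduct c x with hf
  set K : Set (Fin n → ℝ) := {x | ∀ i, 0 ≤ x i} with hK
  have fcont : Continuous f := by
    apply Continuous.sub ((Qcont A).div_const 2)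
    exact continuous_finset_sum (f := fun (i : Fin n) (x : Fin n → ℝ) => c i * x i) Finset.univ
      (fun i _ => continuous_const.mul (continuous_apply i))
  set C : ℝ := Real.sqrt (∑ i, c i ^ 2) with hC
  have hC0 : 0 ≤ C := Real.sqrt_nonneg _
  have hCS : ∀ x : Fin n → ℝ, dotProduct c x ≤ C * Real.sqrt (∑ i, x i ^ 2) := by
    intro x
    have h := Finset.sum_mul_sq_le_sq_mul_sq Finset.univ c x
    have h1 : dotProduct c x ≤ |∑ i, c i * x i| := le_abs_self _
    have h2 : |∑ i, c i * x i| = Real.sqrt ((∑ i, c i * x i) ^ 2) :=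
      (Real.sqrt_sq_eq_abs _).symm
    have h3 : Real.sqrt ((∑ i, c i * x i) ^ 2) ≤
        Real.sqrt ((∑ i, c i ^ 2) * ∑ i, x i ^ 2) := Real.sqrt_le_sqrt h
    rw [Real.sqrt_mul (Finset.sum_nonneg fun i _ => sq_nonneg _)] at h3
    calc dotProduct c x ≤ _ := h1
      _ = _ := h2
      _ ≤ _ := h3
  set D : Set (Fin n → ℝ) := K ∩ {x | f x ≤ 0} with hD
  have hKclosed : IsClosed K := by
    have : K = ⋂ i, {x : Fin n → ℝ | 0 ≤ x i} := by ext x; simp [hK]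
    rw [this]
    exact isClosed_iInter fun i => isClosed_le continuous_const (continuous_apply i)
  have hDclosed : IsClosed D := hKclosed.inter (isClosed_le fcont continuous_const)
  have h0D : (0 : Fin n → ℝ) ∈ D := by
    constructor
    · intro i; simp
    · simp [hf, dotProduct]
  have hDbdd : Bornology.IsBounded D := by
    apply Bornology.IsBounded.subset
      (Metric.isBounded_closedBall (x := (0 : Fin n → ℝ)) (r := 2 * C / m))
    intro x hx
    obtain ⟨hxK, hxf⟩ := hx
    simp only [Metric.mem_closedBall, dist_zero_right]
    set s : ℝ := ∑ i, x i ^ 2 with hs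
    have hs0 : 0 ≤ s := Finset.sum_nonneg fun i _ => sq_nonneg _
    set t : ℝ := Real.sqrt s with ht
    have ht0 : 0 ≤ t := Real.sqrt_nonneg _
    have ht2 : t ^ 2 = s := Real.sq_sqrt hs0
    have hfx : m * s / 2 ≤ C * t := by
      have h1 : m * s ≤ dotProduct x (A.mulVec x) := hmB x
      have h2 : dotProduct x (A.mulVec x) / 2 - dotProduct c x ≤ 0 := hxf
      have h3 := hCS x
      linarith
    have htle : t ≤ 2 * C / m := by
      rw [le_div_iff₀ hm]
      rcases eq_or_lt_of_le ht0 with h | h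
      · rw [← h]; simp; positivity
      · nlinarith [hfx, ht2]
    rw [pi_norm_le_iff_of_nonneg (le_trans ht0 htle)]
    intro i
    rw [Real.norm_eq_abs, ← Real.sqrt_sq_eq_abs]
    refine le_trans (Real.sqrt_le_sqrt ?_) (le_trans (le_of_eq rfl) htle)
    exact Finset.single_le_sum (f := fun i => x i ^ 2) (fun j _ => sq_nonneg _)
      (Finset.mem_univ i)
  obtain ⟨xs, hxsD, hxsmin⟩ :=
    (Metric.isCompact_of_isClosed_isBounded hDclosed hDbdd).exists_isMinOn
      ⟨0, h0D⟩ fcont.continuousOn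
  have hglob : ∀ y ∈ K, f xs ≤ f y := by
    intro y hy
    by_cases h : f y ≤ 0
    · exact hxsmin ⟨hy, h⟩
    · have h1 : f xs ≤ f 0 := hxsmin h0D
      have h2 : f 0 = 0 := by simp [hf, dotProduct]
      push_neg at h
      linarith
  have hxsK : ∀ i, 0 ≤ xs i := hxsD.1
  set g : Fin n → ℝ := fun i => (∑ j, A i j * xs j) - c i with hg
  have hfexp : ∀ (t : ℝ) (i : Fin n),
      f (xs + Pi.single i t) = f xs + t * g i + t ^ 2 * A i i / 2 := by
    intro t i
    simp only [hf, hg]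
    rw [Qexpand A hsym, dotProduct_add, dotProduct_single]
    ring
  have hmemK : ∀ (i : Fin n) (t : ℝ), 0 ≤ xs i + t → (xs + Pi.single i t) ∈ K := by
    intro i t hti j
    rcases eq_or_ne j i with rfl | hj
    · simpa using hti
    · simpa [Pi.single_apply, hj] using hxsK j
  have hAii : ∀ i, 0 < A i i := by
    intro i
    have hne : (Pi.single i 1 : Fin n → ℝ) ≠ 0 := by
      intro h
      have := congrFun h i
      simp at this
    have hq := Qpos hA hne
    have he : dotProduct (Pi.single i 1) (A.mulVec (Pi.single i 1)) = A i i := by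
      rw [Matrix.mulVec_single_one, single_dotProduct]; simp
    rwa [he] at hq
  have hg_nonneg : ∀ i, 0 ≤ g i := by
    intro i
    by_contra hgi
    push_neg at hgi
    have ha0 : 0 < A i i := hAii i
    set t : ℝ := -g i / A i i with htdef
    have htpos : 0 < t := div_pos (neg_pos.mpr hgi) ha0
    have hmem : (xs + Pi.single i t) ∈ K := hmemK i t (by nlinarith [hxsK i])
    have hle := hglob _ hmem
    rw [hfexp t i] at hle
    have h0 : 0 ≤ t * g i + t ^ 2 * A i i / 2 := by linarith
    have := key1 ha0 hgi htdef
    linarith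
  have hg_zero : ∀ i, 0 < xs i → g i = 0 := by
    intro i hxi
    by_contra hgi
    have hgpos : 0 < g i := lt_of_le_of_ne (hg_nonneg i) (Ne.symm hgi)
    have ha0 : 0 < A i i := hAii i
    set t : ℝ := -min (xs i) (g i / A i i) with htdef
    have hminpos : 0 < min (xs i) (g i / A i i) := lt_min hxi (div_pos hgpos ha0)
    have htneg : t < 0 := by rw [htdef]; exact neg_lt_zero.mpr hminpos
    have hmem : (xs + Pi.single i t) ∈ K := by
      apply hmemK i t
      have h1 : -t ≤ xs i := by
        rw [htdef, neg_neg]; exact min_le_left _ _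
      linarith
    have hle := hglob _ hmem
    rw [hfexp t i] at hle
    have h0 : 0 ≤ t * g i + t ^ 2 * A i i / 2 := by linarith
    have hta : (-t) * A i i ≤ g i := by
      have h1 : -t ≤ g i / A i i := by rw [htdef, neg_neg]; exact min_le_right _ _
      rw [← le_div_iff₀ ha0]; exact h1
    have := key2 ha0 hgpos htneg hta
    linarith
  refine ⟨({i | 0 < xs i}, xs), ⟨?_, ?_, ?_, ?_⟩, ?_⟩
  · intro i hi
    simp only [Set.mem_setOf_eq, not_lt] at hi
    exact le_antisymm hi (hxsK i)
  · intro i hi; exact hi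
  · intro i hi
    have := hg_zero i hi
    simp only [hg] at this
    linarith
  · intro i
    have := hg_nonneg i
    simp only [hg] at this
    linarith
  · rintro ⟨T, y⟩ ⟨hq1, hq2, hq3, hq4⟩
    simp only at hq1 hq2 hq3 hq4 ⊢
    have hyK : ∀ i, 0 ≤ y i := by
      intro i
      by_cases h : i ∈ T
      · exact (hq2 i h).le
      · exact (hq1 i h).ge
    set u : Fin n → ℝ := fun i => (∑ j, A i j * y j) - c i with hu
    have hu0 : ∀ i, 0 ≤ u i := fun i => by simp only [hu]; linarith [hq4 i]
    have hyu : ∀ i, y i * u i = 0 := by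
      intro i
      by_cases h : i ∈ T
      · simp only [hu]
        rw [hq3 i h]; ring
      · rw [hq1 i h]; ring
    have hxw : ∀ i, xs i * g i = 0 := by
      intro i
      rcases eq_or_lt_of_le (hxsK i) with h | h
      · rw [← h]; ring
      · rw [hg_zero i h]; ring
    have hzQ : dotProduct (y - xs) (A.mulVec (y - xs)) =
        ∑ i, (y i - xs i) * (u i - g i) := by
      rw [Qeq]
      refine Finset.sum_congr rfl fun i _ => ?_
      have h1 : ∑ j, A i j * (y - xs) j = (∑ j, A i j * y j) - ∑ j, A i j * xs j := by
        rw [← Finset.sum_sub_distrib]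
        exact Finset.sum_congr rfl fun j _ => by simp [mul_sub]
      rw [Pi.sub_apply, h1]
      simp only [hu, hg]
      ring
    have hzle : dotProduct (y - xs) (A.mulVec (y - xs)) ≤ 0 := by
      rw [hzQ]
      apply Finset.sum_nonpos
      intro i _
      have : (y i - xs i) * (u i - g i) =
          -(y i * g i) - xs i * u i + y i * u i + xs i * g i := by ring
      rw [this, hyu i, hxw i]
      have h1 : 0 ≤ y i * g i := mul_nonneg (hyK i) (hg_nonneg i)
      have h2 : 0 ≤ xs i * u i := mul_nonneg (hxsK i) (hu0 i)
      linarith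
    have hyz : y = xs := by
      by_contra h
      have hne : y - xs ≠ 0 := sub_ne_zero.mpr h
      exact absurd hzle (not_le.mpr (Qpos hA hne))
    subst hyz
    refine Prod.ext ?_ rfl
    ext i
    simp only [Set.mem_setOf_eq]
    constructor
    · exact hq2 i
    · intro h
      by_contra hiT
      rw [hq1 i hiT] at h
      exact lt_irrefl 0 h
end

section
/- The set C = { f ∈ L²([0,1]) : there exists a sequence (aₙ) of nonnegative reals with Σ_{n=0}^∞ aₙ (-t)ⁿ converging to f in L²([0,1]) } is not closed in L²([0,1]). Specifically, the functions g_k(t) = 1/(1 + ρ_k t)² with ρ_k = 1 - 1/(k+1) belong to C and converge in L² to g_∞(t) = 1/(1+t)², but g_∞ ∉ C. -/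
set_option maxHeartbeats 1000000
open MeasureTheory Filter


lemma hasSum_aux {x : ℝ} (hx : |x| < 1) :
    HasSum (fun n : ℕ => ((n:ℝ)+1) * x^n) (1/(1-x)^2) := by
  have hx' : ‖x‖ < 1 := by rwa [Real.norm_eq_abs]
  have h1 := hasSum_coe_mul_geometric_of_norm_lt_one hx'
  have h2 := hasSum_geometric_of_norm_lt_one hx'
  have h3 := h1.add h2
  have hne : (1:ℝ) - x ≠ 0 := by
    have : x < 1 := lt_of_le_of_lt (le_abs_self x) hx
    linarith
  have he : (fun n : ℕ => ((n:ℝ)+1) * x^n) = fun n : ℕ => (n:ℝ) * x^n + x^n := by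
    funext n; ring
  have hv : x / (1 - x) ^ 2 + (1 - x)⁻¹ = 1/(1-x)^2 := by
    field_simp; ring
  rw [he, ← hv]; exact h3


lemma coeff_zero (d : ℕ → ℝ) (hd : Summable (fun n => |d n| * (1/2:ℝ)^n))
    (hG : ∀ ε > 0, ∃ t : ℝ, 0 < t ∧ t ≤ 1/2 ∧ t < ε ∧ ∑' n, d n * t^n = 0) :
    ∀ n, d n = 0 := by
  -- summability helpers
  have Sb : ∀ m : ℕ, Summable (fun k => |d (m + k)| * (1/2:ℝ)^k) := by
    intro m
    have h1 : Summable (fun k => |d (k + m)| * (1/2:ℝ)^(k+m)) :=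
      (summable_nat_add_iff m).2 hd
    have h2 := h1.mul_right ((2:ℝ)^m)
    refine h2.congr fun k => ?_
    rw [add_comm m k]
    rw [pow_add]
    simp only [mul_assoc, ← mul_pow]
    norm_num
  have Ssum : ∀ (m : ℕ) (t : ℝ), 0 < t → t ≤ 1/2 → Summable (fun k => d (m + k) * t^k) := by
    intro m t ht ht2
    refine Summable.of_norm_bounded (Sb m) fun k => ?_
    rw [Real.norm_eq_abs, abs_mul, abs_pow, abs_of_pos ht]
    exact mul_le_mul_of_nonneg_left (pow_le_pow_left₀ ht.le ht2 k) (abs_nonneg _)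
  intro n
  induction n using Nat.strong_induction_on with
  | _ n ih =>
    set C : ℝ := ∑' k, |d (n + 1 + k)| * (1/2:ℝ)^k with hC
    have hC0 : 0 ≤ C := tsum_nonneg fun k => by positivity
    have key : ∀ ε > 0, |d n| < ε * (C + 1) := by
      intro ε hε
      obtain ⟨t, ht, ht2, htε, hsum⟩ := hG ε hε
      -- full series splits
      have hS0 : Summable (fun k => d k * t^k) := by
        have := Ssum 0 t ht ht2
        simpa using this
      have hsplit := Summable.sum_add_tsum_nat_add (f := fun k => d k * t^k) n hS0
      have hzero : ∑ k ∈ Finset.range n, d k * t^k = 0 := by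
        refine Finset.sum_eq_zero fun k hk => ?_
        rw [ih k (Finset.mem_range.1 hk)]; ring
      rw [hzero, zero_add, hsum] at hsplit
      -- factor t^n
      have hfac : ∑' k, d (k + n) * t^(k+n) = t^n * ∑' k, d (n + k) * t^k := by
        rw [← tsum_mul_left]
        congr 1; funext k
        rw [add_comm k n, pow_add]; ring
      rw [hfac] at hsplit
      have htn : (t:ℝ)^n ≠ 0 := pow_ne_zero n ht.ne'
      have hT : ∑' k, d (n + k) * t^k = 0 := by
        rcases mul_eq_zero.1 hsplit with h | h
        · exact absurd h htn
        · exact h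
      -- split one more term
      have hS1 := Ssum n t ht ht2
      have hsplit2 := Summable.sum_add_tsum_nat_add (f := fun k => d (n + k) * t^k) 1 hS1
      rw [hT] at hsplit2
      have h1 : ∑ k ∈ Finset.range 1, d (n + k) * t^k = d n := by simp
      rw [h1] at hsplit2
      have hfac2 : ∑' k, d (n + (k + 1)) * t^(k+1) = t * ∑' k, d (n + 1 + k) * t^k := by
        rw [← tsum_mul_left]
        congr 1; funext k
        have : n + (k + 1) = n + 1 + k := by omega
        rw [this, pow_succ]; ring
      rw [hfac2] at hsplit2
      -- bound
      have hR : |∑' k, d (n + 1 + k) * t^k| ≤ C := by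
        have h1 : ∀ k, ‖d (n + 1 + k) * t^k‖ ≤ |d (n + 1 + k)| * (1/2:ℝ)^k := by
          intro k
          rw [Real.norm_eq_abs, abs_mul, abs_pow, abs_of_pos ht]
          exact mul_le_mul_of_nonneg_left (pow_le_pow_left₀ ht.le ht2 k) (abs_nonneg _)
        have hsum' : Summable (fun k => ‖d (n + 1 + k) * t^k‖) :=
          (Sb (n+1)).of_nonneg_of_le (fun k => norm_nonneg _) h1
        have hb1 := norm_tsum_le_tsum_norm hsum'
        have hb2 := Summable.tsum_le_tsum h1 hsum' (Sb (n+1))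
        rw [Real.norm_eq_abs] at hb1
        exact hb1.trans hb2
      have : |d n| = t * |∑' k, d (n + 1 + k) * t^k| := by
        have : d n = -(t * ∑' k, d (n + 1 + k) * t^k) := by linarith [hsplit2]
        rw [this, abs_neg, abs_mul, abs_of_pos ht]
      rw [this]
      calc t * |∑' k, d (n + 1 + k) * t^k| ≤ t * C :=
            mul_le_mul_of_nonneg_left hR ht.le
        _ < ε * (C + 1) := by
            have : t * C ≤ t * (C+1) := by nlinarith
            have h2 : t * (C+1) < ε * (C+1) := by nlinarith
            linarith
    by_contra h
    have hdn : 0 < |d n| := abs_pos.2 h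
    have := key (|d n| / (C + 1)) (by positivity)
    rw [div_mul_cancel₀] at this
    · exact absurd this (lt_irrefl _)
    · positivity

lemma alg_bound (u t : ℝ) (hu0 : 0 < u) (hu1 : u ≤ 1) (ht0 : 0 ≤ t) (ht1 : t ≤ 1) :
    |1/(1+(1-u)*t)^2 - 1/(1+t)^2| ≤ 4*u := by
  set A : ℝ := 1+(1-u)*t with hA
  set B : ℝ := 1+t with hB
  have hA1 : 1 ≤ A := by rw [hA]; nlinarith
  have hB1 : 1 ≤ B := by rw [hB]; linarith
  have hAB : A ≤ B := by rw [hA, hB]; nlinarith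
  have hd0 : 0 ≤ 1/A^2 - 1/B^2 := by
    have h1 : A^2 ≤ B^2 := by nlinarith
    have h2 : (1:ℝ)/B^2 ≤ 1/A^2 := by
      apply one_div_le_one_div_of_le (by nlinarith) h1
    linarith
  rw [abs_of_nonneg hd0]
  have key : 1/A^2 - 1/B^2 = (B^2 - A^2) / (A^2*B^2) := by
    field_simp
  have hBA : B^2 - A^2 = u*t*(B+A) := by rw [hA, hB]; ring
  have h3 : B^2 - A^2 ≤ 4*u := by
    rw [hBA]
    have hBA4 : B + A ≤ 4 := by rw [hA, hB]; nlinarith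
    have hut : u*t ≤ u := by nlinarith
    nlinarith [mul_nonneg hu0.le ht0]
  have h4 : (B^2 - A^2) / (A^2*B^2) ≤ B^2 - A^2 := by
    refine div_le_self (by nlinarith) ?_
    have hA2 : 1 ≤ A^2 := by nlinarith
    have hB2 : 1 ≤ B^2 := by nlinarith
    nlinarith
  rw [key]
  exact h4.trans h3

lemma part1 (μ : Measure ℝ) (hμ : μ = volume.restrict (Set.Icc (0:ℝ) 1))
    (ρ : ℝ) (h0 : 0 ≤ ρ) (h1 : ρ < 1) (gk : Lp ℝ 2 μ)
    (hgk : ∀ᵐ t ∂μ, gk t = 1/(1+ρ*t)^2) :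
    ∃ a : ℕ → ℝ, (∀ n, 0 ≤ a n) ∧
      Tendsto (fun N => ∫ t, ((∑ n ∈ Finset.range N, a n * (-t)^n) - gk t)^2 ∂μ)
        atTop (nhds 0) := by
  have hfin : IsFiniteMeasure μ := by
    subst hμ
    constructor
    simp [Real.volume_Icc]
  refine ⟨fun n => ((n:ℝ)+1) * ρ^n, fun n => by positivity, ?_⟩
  have hρ1 : |ρ| < 1 := by rwa [abs_of_nonneg h0]
  have hsummable : Summable (fun n : ℕ => ((n:ℝ)+1) * ρ^n) := (hasSum_aux hρ1).summable
  set ε : ℕ → ℝ := fun N => ∑' k, (((k+N:ℕ):ℝ)+1) * ρ^(k+N) with hε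
  have hεt : Tendsto ε atTop (nhds 0) := by
    have := tendsto_sum_nat_add (f := fun n : ℕ => ((n:ℝ)+1) * ρ^n)
    simpa [hε] using this
  have hε0 : ∀ N, 0 ≤ ε N := fun N => tsum_nonneg fun k => by positivity
  -- pointwise bound
  have hpt : ∀ N : ℕ, ∀ t ∈ Set.Icc (0:ℝ) 1,
      |(∑ n ∈ Finset.range N, (((n:ℝ)+1) * ρ^n) * (-t)^n) - 1/(1+ρ*t)^2| ≤ ε N := by
    intro N t ht
    obtain ⟨ht0, ht1⟩ := ht
    have hx : |(-(ρ*t))| < 1 := by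
      rw [abs_neg, abs_of_nonneg (by positivity)]
      nlinarith
    have hS := hasSum_aux hx
    have heq : (1:ℝ) - (-(ρ*t)) = 1 + ρ*t := by ring
    rw [heq] at hS
    have hsplit := Summable.sum_add_tsum_nat_add (f := fun n : ℕ => ((n:ℝ)+1) * (-(ρ*t))^n) N hS.summable
    have hterm : ∀ n : ℕ, (((n:ℝ)+1) * ρ^n) * (-t)^n = ((n:ℝ)+1) * (-(ρ*t))^n := by
      intro n
      have hp : (-(ρ*t))^n = ρ^n * (-t)^n := by
        rw [show -(ρ*t) = ρ * (-t) by ring, mul_pow]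
      rw [hp]; ring
    have hps : (∑ n ∈ Finset.range N, (((n:ℝ)+1) * ρ^n) * (-t)^n)
        = ∑ n ∈ Finset.range N, ((n:ℝ)+1) * (-(ρ*t))^n :=
      Finset.sum_congr rfl fun n _ => hterm n
    rw [hps]
    rw [hS.tsum_eq] at hsplit
    have : (∑ n ∈ Finset.range N, ((n:ℝ)+1) * (-(ρ*t))^n) - 1/(1+ρ*t)^2
        = -(∑' k, (((k+N:ℕ):ℝ)+1) * (-(ρ*t))^(k+N)) := by
      rw [← hsplit]; push_cast; ring
    rw [this, abs_neg]
    have hbd : ∀ k : ℕ, ‖(((k+N:ℕ):ℝ)+1) * (-(ρ*t))^(k+N)‖ ≤ (((k+N:ℕ):ℝ)+1) * ρ^(k+N) := by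
      intro k
      rw [Real.norm_eq_abs, abs_mul, abs_pow, abs_neg, abs_of_nonneg (by positivity : (0:ℝ) ≤ ρ*t),
        abs_of_nonneg (by positivity : (0:ℝ) ≤ ((k+N:ℕ):ℝ)+1)]
      refine mul_le_mul_of_nonneg_left (pow_le_pow_left₀ (by positivity) ?_ _) (by positivity)
      nlinarith
    have hsum2 : Summable (fun k : ℕ => (((k+N:ℕ):ℝ)+1) * ρ^(k+N)) :=
      (summable_nat_add_iff (f := fun n : ℕ => ((n:ℝ)+1) * ρ^n) N).2 hsummable
    have hsum1 : Summable (fun k : ℕ => ‖(((k+N:ℕ):ℝ)+1) * (-(ρ*t))^(k+N)‖) :=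
      hsum2.of_nonneg_of_le (fun k => norm_nonneg _) hbd
    calc |∑' k, (((k+N:ℕ):ℝ)+1) * (-(ρ*t))^(k+N)|
        ≤ ∑' k, ‖(((k+N:ℕ):ℝ)+1) * (-(ρ*t))^(k+N)‖ := by
          have := norm_tsum_le_tsum_norm hsum1
          rwa [Real.norm_eq_abs] at this
      _ ≤ ∑' k, (((k+N:ℕ):ℝ)+1) * ρ^(k+N) := Summable.tsum_le_tsum hbd hsum1 hsum2
      _ = ε N := rfl
  -- integral bound
  have hint : ∀ N : ℕ, ‖∫ t, ((∑ n ∈ Finset.range N, (((n:ℝ)+1) * ρ^n) * (-t)^n) - gk t)^2 ∂μ‖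
      ≤ ε N ^ 2 * (μ Set.univ).toReal := by
    intro N
    refine norm_integral_le_of_norm_le_const ?_
    have hmem : ∀ᵐ t ∂μ, t ∈ Set.Icc (0:ℝ) 1 := by
      rw [hμ]
      exact ae_restrict_mem measurableSet_Icc
    filter_upwards [hmem, hgk] with t ht hgt
    rw [Real.norm_eq_abs, abs_of_nonneg (sq_nonneg _), hgt]
    have := hpt N t ht
    have h2 := abs_nonneg ((∑ n ∈ Finset.range N, (((n:ℝ)+1) * ρ^n) * (-t)^n) - 1/(1+ρ*t)^2)
    calc ((∑ n ∈ Finset.range N, (((n:ℝ)+1) * ρ^n) * (-t)^n) - 1/(1+ρ*t)^2)^2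
        = |(∑ n ∈ Finset.range N, (((n:ℝ)+1) * ρ^n) * (-t)^n) - 1/(1+ρ*t)^2|^2 := (sq_abs _).symm
      _ ≤ ε N ^ 2 := by nlinarith [hε0 N]
  have hμuniv : (μ Set.univ).toReal = 1 := by
    rw [hμ, Measure.restrict_apply_univ, Real.volume_Icc]
    norm_num
  have hb : Tendsto (fun N => ε N ^ 2 * (μ Set.univ).toReal) atTop (nhds 0) := by
    rw [hμuniv]
    simpa using ((hεt.mul hεt).mul_const (1:ℝ)).congr (fun N => by ring)
  exact squeeze_zero_norm (fun N => hint N) (by simpa using hb)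

lemma part3 (μ : Measure ℝ) (hμ : μ = volume.restrict (Set.Icc (0:ℝ) 1))
    (ginf : Lp ℝ 2 μ) (hginf : ∀ᵐ t ∂μ, ginf t = 1 / (1 + t)^2) :
    ¬ ∃ a : ℕ → ℝ, (∀ n, 0 ≤ a n) ∧
      Tendsto (fun N => ∫ t, ((∑ n ∈ Finset.range N, a n * (-t)^n) - ginf t)^2 ∂μ)
        atTop (nhds 0) := by
  rintro ⟨a, ha, hconv⟩
  haveI hfin : IsFiniteMeasure μ := by
    subst hμ; constructor; simp [Real.volume_Icc]
  have hmf : AEStronglyMeasurable (⇑ginf) μ := (Lp.memLp ginf).aestronglyMeasurable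
  have hf2 : Integrable (fun t => (ginf t)^2) μ := (Lp.memLp ginf).integrable_sq
  set S : ℕ → ℝ → ℝ := fun N t => ∑ n ∈ Finset.range N, a n * (-t)^n with hS
  have hScont : ∀ N, Continuous (S N) := by
    intro N
    exact continuous_finset_sum _ fun n _ => (continuous_const.mul ((continuous_neg).pow n))
  have hSsqint : ∀ N M : ℕ, Integrable (fun t => (S N t - S M t)^2) μ := by
    intro N M
    rw [hμ]
    exact (((hScont N).sub (hScont M)).pow 2).integrableOn_Icc
  have hdiffInt : ∀ N, Integrable (fun t => (S N t - ginf t)^2) μ := by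
    intro N
    have hSint : Integrable (fun t => (S N t)^2) μ := by
      rw [hμ]; exact ((hScont N).pow 2).integrableOn_Icc
    have hbd : Integrable (fun t => 2*(S N t)^2 + 2*(ginf t)^2) μ :=
      (hSint.const_mul 2).add (hf2.const_mul 2)
    refine hbd.mono' ?_ ?_
    · exact (((hScont N).aestronglyMeasurable.sub hmf).pow 2)
    · filter_upwards with t
      rw [Real.norm_eq_abs, abs_of_nonneg (sq_nonneg _)]
      nlinarith [sq_nonneg (S N t + ginf t)]
  -- the integral values
  set A : ℕ → ℝ := fun N => ∫ t, ((S N t) - ginf t)^2 ∂μ with hA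
  have hAconv : Tendsto A atTop (nhds 0) := hconv
  have hAnn : ∀ N, 0 ≤ A N := fun N => integral_nonneg fun t => sq_nonneg _
  -- Step A : a N ^ 2 / (2N+1) → 0
  have hmoment : ∀ N : ℕ, ∫ t, (S (N+1) t - S N t)^2 ∂μ = a N ^ 2 * (1/(2*(N:ℝ)+1)) := by
    intro N
    have h1 : ∀ t : ℝ, (S (N+1) t - S N t)^2 = a N ^ 2 * t^(2*N) := by
      intro t
      have hdd : S (N+1) t - S N t = a N * (-t)^N := by
        rw [hS]; simp [Finset.sum_range_succ]
      rw [hdd, mul_pow, ← pow_mul, mul_comm N 2, pow_mul, neg_sq, ← pow_mul]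
    simp_rw [h1]
    rw [integral_const_mul, hμ]
    have h2 : ∫ t in Set.Icc (0:ℝ) 1, t^(2*N) = 1/(2*(N:ℝ)+1) := by
      rw [integral_Icc_eq_integral_Ioc, ← intervalIntegral.integral_of_le (by norm_num : (0:ℝ) ≤ 1),
        integral_pow]
      push_cast; norm_num
    rw [h2]
  have hstepA : Tendsto (fun N => a N ^ 2 * (1/(2*(N:ℝ)+1))) atTop (nhds 0) := by
    have hub : ∀ N, a N ^ 2 * (1/(2*(N:ℝ)+1)) ≤ 2 * A (N+1) + 2 * A N := by
      intro N
      rw [← hmoment N]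
      have hle : ∀ t : ℝ, (S (N+1) t - S N t)^2 ≤ 2*(S (N+1) t - ginf t)^2 + 2*(S N t - ginf t)^2 := by
        intro t; nlinarith [sq_nonneg ((S (N+1) t - ginf t) + (S N t - ginf t))]
      calc ∫ t, (S (N+1) t - S N t)^2 ∂μ
          ≤ ∫ t, (2*(S (N+1) t - ginf t)^2 + 2*(S N t - ginf t)^2) ∂μ := by
            refine integral_mono (hSsqint (N+1) N) ?_ hle
            exact ((hdiffInt (N+1)).const_mul 2).add ((hdiffInt N).const_mul 2)
        _ = 2 * A (N+1) + 2 * A N := by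
            rw [integral_add ((hdiffInt (N+1)).const_mul 2) ((hdiffInt N).const_mul 2),
              integral_const_mul, integral_const_mul]
    have hlb : ∀ N, 0 ≤ a N ^ 2 * (1/(2*(N:ℝ)+1)) := by
      intro N; positivity
    have htend : Tendsto (fun N => 2 * A (N+1) + 2 * A N) atTop (nhds 0) := by
      have h1 : Tendsto (fun N => A (N+1)) atTop (nhds 0) :=
        hAconv.comp (tendsto_add_atTop_nat 1)
      simpa using ((h1.const_mul 2).add (hAconv.const_mul 2))
    exact squeeze_zero hlb hub htend
  -- boundedness and growth bound on a
  obtain ⟨K, hK⟩ : ∃ K, ∀ N, a N ^ 2 * (1/(2*(N:ℝ)+1)) ≤ K := by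
    obtain ⟨K, hK⟩ := hstepA.bddAbove_range
    exact ⟨K, fun N => hK ⟨N, rfl⟩⟩
  have hK0 : 0 ≤ K := le_trans (by positivity) (hK 0)
  have hgrow : ∀ n : ℕ, a n ≤ Real.sqrt K * (2*(n:ℝ)+1) := by
    intro n
    have hpos : (0:ℝ) < 2*(n:ℝ)+1 := by positivity
    have h1 : a n ^ 2 ≤ K * (2*(n:ℝ)+1) := by
      have := hK n
      rw [mul_one_div] at this
      exact (div_le_iff₀ hpos).1 this
    have h2 : a n ^ 2 ≤ (Real.sqrt K * (2*(n:ℝ)+1))^2 := by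
      rw [mul_pow, Real.sq_sqrt hK0]
      nlinarith
    calc a n = Real.sqrt (a n ^ 2) := by rw [Real.sqrt_sq (ha n)]
      _ ≤ Real.sqrt ((Real.sqrt K * (2*(n:ℝ)+1))^2) := Real.sqrt_le_sqrt h2
      _ = Real.sqrt K * (2*(n:ℝ)+1) := Real.sqrt_sq (by positivity)
  -- summability
  have hgeo : Summable (fun n : ℕ => ((n:ℝ)+1) * (1/2:ℝ)^n) := (hasSum_aux (by rw [abs_lt]; constructor <;> norm_num)).summable
  have hmaj : Summable (fun n : ℕ => Real.sqrt K * (2*(n:ℝ)+1) * (1/2:ℝ)^n) := by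
    have h2 : Summable (fun n : ℕ => (2*(n:ℝ)+1) * (1/2:ℝ)^n) := by
      have := hgeo.mul_left 2
      refine (this.add ((summable_geometric_of_lt_one (r := (1/2:ℝ)) (by norm_num) (by norm_num)).mul_left (-1))).congr fun n => ?_
      ring
    simpa [mul_assoc] using h2.mul_left (Real.sqrt K)
  have hsa : Summable (fun n : ℕ => a n * (1/2:ℝ)^n) := by
    refine Summable.of_nonneg_of_le (fun n => mul_nonneg (ha n) (by positivity)) (fun n => ?_) hmaj
    exact mul_le_mul_of_nonneg_right (hgrow n) (by positivity)
  set B : ℝ := ∑' n, a n * (1/2:ℝ)^n with hB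
  -- pointwise convergence on [0,1/2]
  set s : ℝ → ℝ := fun t => ∑' n, a n * (-t)^n with hs
  have hsummt : ∀ t : ℝ, t ∈ Set.Icc (0:ℝ) (1/2) → Summable (fun n => a n * (-t)^n) := by
    rintro t ⟨ht0, ht1⟩
    refine Summable.of_norm_bounded hsa fun n => ?_
    rw [Real.norm_eq_abs, abs_mul, abs_of_nonneg (ha n), abs_pow, abs_neg, abs_of_nonneg ht0]
    exact mul_le_mul_of_nonneg_left (pow_le_pow_left₀ ht0 ht1 n) (ha n)
  have hptconv : ∀ t ∈ Set.Icc (0:ℝ) (1/2), Tendsto (fun N => S N t) atTop (nhds (s t)) := by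
    intro t ht
    exact (hsummt t ht).hasSum.tendsto_sum_nat
  have hSbound : ∀ N, ∀ t ∈ Set.Icc (0:ℝ) (1/2), |S N t| ≤ B := by
    rintro N t ⟨ht0, ht1⟩
    calc |S N t| ≤ ∑ n ∈ Finset.range N, |a n * (-t)^n| := Finset.abs_sum_le_sum_abs _ _
      _ ≤ ∑ n ∈ Finset.range N, a n * (1/2:ℝ)^n := by
          refine Finset.sum_le_sum fun n _ => ?_
          rw [abs_mul, abs_of_nonneg (ha n), abs_pow, abs_neg, abs_of_nonneg ht0]
          exact mul_le_mul_of_nonneg_left (pow_le_pow_left₀ ht0 ht1 n) (ha n)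
      _ ≤ B := Summable.sum_le_tsum _ (fun n _ => mul_nonneg (ha n) (by positivity)) hsa
  -- restricted measure
  set μ' : Measure ℝ := μ.restrict (Set.Icc (0:ℝ) (1/2)) with hμ'def
  have hμ' : μ' = volume.restrict (Set.Icc (0:ℝ) (1/2)) := by
    rw [hμ'def, hμ, Measure.restrict_restrict measurableSet_Icc, Set.Icc_inter_Icc]
    norm_num
  -- dominated convergence on μ'
  have hmemIcc : ∀ᵐ t ∂μ', t ∈ Set.Icc (0:ℝ) (1/2) := by
    rw [hμ'def]; exact ae_restrict_mem measurableSet_Icc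
  have hmf' : AEStronglyMeasurable (⇑ginf) μ' := hmf.restrict
  have hbound_int : Integrable (fun t => 2*B^2 + 2*(ginf t)^2) μ' :=
    (integrable_const _).add ((hf2.restrict).const_mul 2)
  have hFle : ∀ N : ℕ, ∀ᵐ t ∂μ', ‖(S N t - ginf t)^2‖ ≤ 2*B^2 + 2*(ginf t)^2 := by
    intro N
    filter_upwards [hmemIcc] with t ht
    rw [Real.norm_eq_abs, abs_of_nonneg (sq_nonneg _)]
    have := hSbound N t ht
    have habs := abs_nonneg (S N t)
    nlinarith [mul_self_le_mul_self habs this, sq_abs (S N t), sq_nonneg (S N t + ginf t)]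
  have hFlim : ∀ᵐ t ∂μ', Tendsto (fun N => (S N t - ginf t)^2) atTop (nhds ((s t - ginf t)^2)) := by
    filter_upwards [hmemIcc] with t ht
    exact ((hptconv t ht).sub_const _).pow 2
  have hFmeas : ∀ N : ℕ, AEStronglyMeasurable (fun t => (S N t - ginf t)^2) μ' :=
    fun N => ((hScont N).aestronglyMeasurable.sub hmf').pow 2
  have hDCT : Tendsto (fun N => ∫ t, (S N t - ginf t)^2 ∂μ') atTop
      (nhds (∫ t, (s t - ginf t)^2 ∂μ')) :=
    tendsto_integral_of_dominated_convergence _ hFmeas hbound_int hFle hFlim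
  -- the restricted integrals also tend to 0
  have hrest0 : Tendsto (fun N => ∫ t, (S N t - ginf t)^2 ∂μ') atTop (nhds 0) := by
    refine squeeze_zero (fun N => integral_nonneg fun t => sq_nonneg _) (fun N => ?_) hAconv
    exact integral_mono_measure Measure.restrict_le_self
      (Filter.Eventually.of_forall fun t => sq_nonneg _) (hdiffInt N)
  have hzero : ∫ t, (s t - ginf t)^2 ∂μ' = 0 := tendsto_nhds_unique hDCT hrest0
  -- conclude a.e. equality
  have hsm : AEStronglyMeasurable (fun t => (s t - ginf t)^2) μ' :=
    aestronglyMeasurable_of_tendsto_ae atTop hFmeas hFlim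
  have hint' : Integrable (fun t => (s t - ginf t)^2) μ' := by
    refine hbound_int.mono' hsm ?_
    filter_upwards [hmemIcc] with t ht
    rw [Real.norm_eq_abs, abs_of_nonneg (sq_nonneg _)]
    have h1 : |s t| ≤ B := by
      rw [hs]
      have hsum1 : Summable (fun n => ‖a n * (-t)^n‖) := by
        refine Summable.of_nonneg_of_le (fun n => norm_nonneg _) (fun n => ?_) hsa
        rw [Real.norm_eq_abs, abs_mul, abs_of_nonneg (ha n), abs_pow, abs_neg,
          abs_of_nonneg ht.1]
        exact mul_le_mul_of_nonneg_left (pow_le_pow_left₀ ht.1 ht.2 n) (ha n)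
      have := norm_tsum_le_tsum_norm hsum1
      rw [Real.norm_eq_abs] at this
      refine this.trans ?_
      refine Summable.tsum_le_tsum (fun n => ?_) hsum1 hsa
      rw [Real.norm_eq_abs, abs_mul, abs_of_nonneg (ha n), abs_pow, abs_neg, abs_of_nonneg ht.1]
      exact mul_le_mul_of_nonneg_left (pow_le_pow_left₀ ht.1 ht.2 n) (ha n)
    nlinarith [mul_self_le_mul_self (abs_nonneg (s t)) h1, sq_abs (s t), sq_nonneg (s t + ginf t)]
  have haez : ∀ᵐ t ∂μ', s t = ginf t := by
    have h1 := (integral_eq_zero_iff_of_nonneg_ae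
      (Filter.Eventually.of_forall fun t => sq_nonneg _) hint').1 hzero
    filter_upwards [h1] with t ht
    have : (s t - ginf t)^2 = 0 := ht
    have := pow_eq_zero_iff (n := 2) (by norm_num) |>.1 this
    linarith [this]
  have hginf' : ∀ᵐ t ∂μ', (ginf t : ℝ) = 1/(1+t)^2 := ae_restrict_of_ae hginf
  -- set up d and apply coeff_zero
  set d : ℕ → ℝ := fun n => (-1:ℝ)^n * a n - (-1:ℝ)^n * ((n:ℝ)+1) with hd
  have hdsum : Summable (fun n => |d n| * (1/2:ℝ)^n) := by
    have hmaj2 : Summable (fun n : ℕ => (a n + ((n:ℝ)+1)) * (1/2:ℝ)^n) :=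
      (hsa.add hgeo).congr (fun n => by ring)
    refine Summable.of_nonneg_of_le (fun n => by positivity) (fun n => ?_) hmaj2
    have : |d n| ≤ a n + ((n:ℝ)+1) := by
      rw [hd]
      calc |(-1:ℝ)^n * a n - (-1:ℝ)^n * ((n:ℝ)+1)|
          ≤ |(-1:ℝ)^n * a n| + |(-1:ℝ)^n * ((n:ℝ)+1)| := abs_sub _ _
        _ = a n + ((n:ℝ)+1) := by
            rw [abs_mul, abs_mul, abs_pow, abs_neg, abs_one, one_pow, one_mul, one_mul,
              abs_of_nonneg (ha n), abs_of_nonneg (by positivity : (0:ℝ) ≤ (n:ℝ)+1)]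
    exact mul_le_mul_of_nonneg_right this (by positivity)
  have hdt : ∀ t : ℝ, t ∈ Set.Icc (0:ℝ) (1/2) → s t = 1/(1+t)^2 →
      ∑' n, d n * t^n = 0 := by
    rintro t ht hst
    have hx : |(-t)| < 1 := by
      rw [abs_neg, abs_of_nonneg ht.1]; linarith [ht.2]
    have hgeom := hasSum_aux hx
    have heq : (1:ℝ) - (-t) = 1 + t := by ring
    rw [heq] at hgeom
    have hs1 : Summable (fun n => a n * (-t)^n) := hsummt t ht
    have h2 : ∀ n : ℕ, d n * t^n = a n * (-t)^n - ((n:ℝ)+1) * (-t)^n := by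
      intro n
      rw [hd, neg_pow]
      ring
    calc ∑' n : ℕ, d n * t^n = ∑' n : ℕ, (a n * (-t)^n - ((n:ℝ)+1) * (-t)^n) := by
          exact tsum_congr h2
      _ = (∑' n : ℕ, a n * (-t)^n) - ∑' n : ℕ, ((n:ℝ)+1) * (-t)^n :=
          Summable.tsum_sub hs1 hgeom.summable
      _ = s t - 1/(1+t)^2 := by rw [hgeom.tsum_eq, hs]
      _ = 0 := by rw [hst]; ring
  have haed : ∀ᵐ t ∂(volume.restrict (Set.Icc (0:ℝ) (1/2))), ∑' n, d n * t^n = 0 := by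
    rw [← hμ']
    filter_upwards [hmemIcc, haez, hginf'] with t ht h1 h2
    exact hdt t ht (h1.trans h2)
  have hG : ∀ ε > 0, ∃ t : ℝ, 0 < t ∧ t ≤ 1/2 ∧ t < ε ∧ ∑' n, d n * t^n = 0 := by
    intro ε hε
    rw [ae_restrict_iff' measurableSet_Icc] at haed
    rw [ae_iff] at haed
    by_contra hno
    push_neg at hno
    set m := min ε (1/2:ℝ) with hm
    have hm0 : 0 < m := lt_min hε (by norm_num)
    have hsub : Set.Ioo (0:ℝ) m ⊆ {t | ¬(t ∈ Set.Icc (0:ℝ) (1/2) → ∑' n, d n * t^n = 0)} := by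
      rintro t ⟨ht0, htm⟩
      intro hcl
      have htIcc : t ∈ Set.Icc (0:ℝ) (1/2) :=
        ⟨ht0.le, le_of_lt (lt_of_lt_of_le htm (min_le_right _ _))⟩
      have := hcl htIcc
      exact absurd this (hno t ht0 htIcc.2 (lt_of_lt_of_le htm (min_le_left _ _)))
    have := measure_mono (μ := volume) hsub
    rw [haed] at this
    rw [Real.volume_Ioo] at this
    simp only [le_zero_iff] at this
    rw [ENNReal.ofReal_eq_zero] at this
    linarith
  have hdzero := coeff_zero d hdsum hG
  have han : ∀ n : ℕ, a n = (n:ℝ)+1 := by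
    intro n
    have hz := hdzero n
    simp only [hd] at hz
    have hne : ((-1:ℝ)^n) ≠ 0 := pow_ne_zero _ (by norm_num)
    have hmul : (-1:ℝ)^n * (a n - ((n:ℝ)+1)) = 0 := by rw [mul_sub]; exact hz
    rcases mul_eq_zero.1 hmul with h | h
    · exact absurd h hne
    · linarith
  -- final contradiction
  have hlow : ∀ N : ℕ, (1/2:ℝ) ≤ a N ^ 2 * (1/(2*(N:ℝ)+1)) := by
    intro N
    rw [han N]
    rw [mul_one_div, le_div_iff₀ (by positivity)]
    have : (0:ℝ) ≤ (N:ℝ) := Nat.cast_nonneg N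
    nlinarith
  have := hstepA.eventually (eventually_lt_nhds (by norm_num : (0:ℝ) < 1/2))
  obtain ⟨N, hN⟩ := this.exists
  linarith [hlow N, hN]


theorem stmt_15
    (μ : Measure ℝ) (hμ : μ = volume.restrict (Set.Icc (0:ℝ) 1))
    (C : Set (Lp ℝ 2 μ))
    (hC : C = {f : Lp ℝ 2 μ | ∃ a : ℕ → ℝ, (∀ n, 0 ≤ a n) ∧
      Tendsto (fun N => ∫ t, ((∑ n ∈ Finset.range N, a n * (-t)^n) - f t)^2 ∂μ)
        atTop (nhds 0)})
    (g : ℕ → Lp ℝ 2 μ) (ginf : Lp ℝ 2 μ)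
    (hg : ∀ k : ℕ, ∀ᵐ t ∂μ, g k t = 1 / (1 + (1 - 1/((k:ℝ)+1)) * t)^2)
    (hginf : ∀ᵐ t ∂μ, ginf t = 1 / (1 + t)^2) :
    (∀ k, g k ∈ C) ∧ Tendsto g atTop (nhds ginf) ∧ ginf ∉ C ∧ ¬ IsClosed C := by
  haveI hfin : IsFiniteMeasure μ := by
    subst hμ; constructor; simp [Real.volume_Icc]
  have hu : ∀ k : ℕ, 0 < 1/((k:ℝ)+1) ∧ 1/((k:ℝ)+1) ≤ 1 := by
    intro k
    have hk0 : (0:ℝ) ≤ (k:ℝ) := Nat.cast_nonneg k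
    constructor
    · positivity
    · rw [div_le_one (by positivity)]; linarith
  have hmem : ∀ k, g k ∈ C := by
    intro k
    rw [hC]
    have h0 : (0:ℝ) ≤ 1 - 1/((k:ℝ)+1) := by linarith [(hu k).2]
    have h1 : 1 - 1/((k:ℝ)+1) < 1 := by linarith [(hu k).1]
    exact part1 μ hμ _ h0 h1 (g k) (hg k)
  have htend : Tendsto g atTop (nhds ginf) := by
    rw [tendsto_iff_dist_tendsto_zero]
    have hb : ∀ k : ℕ, dist (g k) ginf ≤ 4 * (1/((k:ℝ)+1)) := by
      intro k
      rw [dist_eq_norm]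
      have hbd : ∀ᵐ t ∂μ, ‖(g k - ginf : Lp ℝ 2 μ) t‖ ≤ 4 * (1/((k:ℝ)+1)) := by
        have hmemIcc : ∀ᵐ t ∂μ, t ∈ Set.Icc (0:ℝ) 1 := by
          rw [hμ]; exact ae_restrict_mem measurableSet_Icc
        filter_upwards [Lp.coeFn_sub (g k) ginf, hg k, hginf, hmemIcc] with t ht h1 h2 htI
        rw [ht, Pi.sub_apply, h1, h2, Real.norm_eq_abs]
        exact alg_bound (1/((k:ℝ)+1)) t (hu k).1 (hu k).2 htI.1 htI.2
      have hval := Lp.norm_le_of_ae_bound (by positivity : (0:ℝ) ≤ 4 * (1/((k:ℝ)+1))) hbd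
      have huniv : (measureUnivNNReal μ : ℝ) = 1 := by
        rw [hμ]
        simp [measureUnivNNReal, Measure.restrict_apply_univ, Real.volume_Icc]
      rw [huniv, Real.one_rpow, one_mul] at hval
      exact hval
    refine squeeze_zero (fun k => dist_nonneg) hb ?_
    have := tendsto_one_div_add_atTop_nhds_zero_nat (𝕜 := ℝ)
    simpa using this.const_mul 4
  have hnot : ginf ∉ C := by
    rw [hC]
    intro hmemg
    exact part3 μ hμ ginf hginf hmemg
  refine ⟨hmem, htend, hnot, fun hcl => ?_⟩
  exact hnot (hcl.mem_of_tendsto htend (Filter.Eventually.of_forall hmem))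
end

section
/- Let μ be a positive Radon measure on [0,∞) with finite moments of all orders, let s = sup(supp μ), and suppose μ([0,∞) \ [0,s)) = 0. If f ∈ L²(μ) satisfies f = Σ_{n=0}^∞ aₙ tⁿ in L²(μ) with all aₙ ≥ 0 (i.e., the partial sums converge to f in L²(μ)), then the series Σ_{n=0}^∞ aₙ tⁿ converges pointwise for every t ∈ [0, s), and f(t) = Σ_{n=0}^∞ aₙ tⁿ for μ-almost every t ∈ [0, s). -/
open MeasureTheory Filter

theorem stmt_19 (μ : Measure ℝ)
    (hsupp0 : μ (Set.Iio (0:ℝ)) = 0)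
    (hmom : ∀ n : ℕ, Integrable (fun t => t ^ n) μ)
    (s : EReal)
    (hs : s = sSup ((fun x : ℝ => (x : EReal)) ''
      {x : ℝ | ∀ U : Set ℝ, IsOpen U → x ∈ U → 0 < μ U}))
    (hμs : μ {t : ℝ | 0 ≤ t ∧ ¬ ((t : EReal) < s)} = 0)
    (f : ℝ → ℝ) (hf : MemLp f 2 μ)
    (a : ℕ → ℝ) (ha : ∀ n, 0 ≤ a n)
    (hconv : Tendsto
      (fun N => ∫ t, ((∑ n ∈ Finset.range N, a n * t ^ n) - f t)^2 ∂μ)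
      atTop (nhds 0)) :
    (∀ t : ℝ, 0 ≤ t → (t : EReal) < s → Summable (fun n => a n * t ^ n)) ∧
    (∀ᵐ (t : ℝ) ∂μ, 0 ≤ t → (t : EReal) < s → f t = ∑' n, a n * t ^ n) := by
  set S : ℕ → ℝ → ℝ := fun N t => ∑ n ∈ Finset.range N, a n * t ^ n with hS
  -- measurability of S
  have hSmeas : ∀ N, Measurable (S N) := by
    intro N
    exact Finset.measurable_sum _ (fun n _ => (measurable_id.pow_const n).const_mul _)
  -- integrability of S N ^ 2
  have hS2int : ∀ N, Integrable (fun t => (S N t) ^ 2) μ := by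
    intro N
    have heq : (fun t => (S N t) ^ 2)
        = fun t => ∑ i ∈ Finset.range N, ∑ j ∈ Finset.range N, (a i * a j) * t ^ (i + j) := by
      funext t
      rw [hS, sq, Finset.sum_mul_sum]
      refine Finset.sum_congr rfl (fun i _ => Finset.sum_congr rfl (fun j _ => ?_))
      rw [pow_add]; ring
    rw [heq]
    exact integrable_finset_sum _ fun i _ =>
      integrable_finset_sum _ fun j _ => (hmom (i + j)).const_mul _
  have hSmem : ∀ N, MemLp (S N) 2 μ :=
    fun N => (memLp_two_iff_integrable_sq (hSmeas N).aestronglyMeasurable).2 (hS2int N)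
  have hf2int : Integrable (fun t => (f t) ^ 2) μ :=
    (memLp_two_iff_integrable_sq hf.1).1 hf
  have hg2int : ∀ N, Integrable (fun t => (S N t - f t) ^ 2) μ := fun N =>
    (memLp_two_iff_integrable_sq ((hSmem N).sub hf).1).1 ((hSmem N).sub hf)
  -- bound on ∫ (S N - f)^2
  obtain ⟨B, hB⟩ := hconv.bddAbove_range
  have hB' : ∀ N, ∫ t, (S N t - f t) ^ 2 ∂μ ≤ B := fun N => hB ⟨N, rfl⟩
  set C : ℝ := 2 * B + 2 * ∫ t, (f t) ^ 2 ∂μ with hC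
  have hSC : ∀ N, ∫ t, (S N t) ^ 2 ∂μ ≤ C := by
    intro N
    have hmono : ∀ t, (S N t) ^ 2 ≤ 2 * (S N t - f t) ^ 2 + 2 * (f t) ^ 2 := by
      intro t; nlinarith [sq_nonneg (S N t - 2 * f t)]
    calc ∫ t, (S N t) ^ 2 ∂μ
        ≤ ∫ t, (2 * (S N t - f t) ^ 2 + 2 * (f t) ^ 2) ∂μ :=
          integral_mono (hS2int N) (((hg2int N).const_mul 2).add (hf2int.const_mul 2)) hmono
      _ = 2 * (∫ t, (S N t - f t) ^ 2 ∂μ) + 2 * ∫ t, (f t) ^ 2 ∂μ := by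
          rw [integral_add ((hg2int N).const_mul 2) (hf2int.const_mul 2),
            integral_const_mul, integral_const_mul]
      _ ≤ C := by
          have := hB' N; rw [hC]; linarith
  -- finiteness of μ
  have hfinμ : μ Set.univ < ⊤ := by
    have h1 : Integrable (fun _ : ℝ => (1 : ℝ)) μ := by simpa using hmom 0
    rcases (integrable_const_iff).1 h1 with h | h
    · exact absurd h one_ne_zero
    · exact h.measure_univ_lt_top
  -- Part 1: summability
  have part1 : ∀ t : ℝ, 0 ≤ t → (t : EReal) < s → Summable (fun n => a n * t ^ n) := by
    intro t ht hts
    rw [hs] at hts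
    obtain ⟨y, ⟨x, hxP, rfl⟩, hlt⟩ := lt_sSup_iff.1 hts
    have htx : t < x := by simpa using hlt
    have hm0 : 0 < μ (Set.Ioi t) := hxP (Set.Ioi t) isOpen_Ioi htx
    have hmtop : μ (Set.Ioi t) ≠ ⊤ :=
      (lt_of_le_of_lt (measure_mono (Set.subset_univ _)) hfinμ).ne
    set m : ℝ := (μ (Set.Ioi t)).toReal with hm
    have hmpos : 0 < m := ENNReal.toReal_pos hm0.ne' hmtop
    have hSnonneg : ∀ N, 0 ≤ S N t :=
      fun N => Finset.sum_nonneg fun n _ => mul_nonneg (ha n) (pow_nonneg ht n)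
    have key : ∀ N, (S N t) ^ 2 * m ≤ C := by
      intro N
      have hle : ∀ u ∈ Set.Ioi t, (S N t) ^ 2 ≤ (S N u) ^ 2 := by
        intro u hu
        have h1 : S N t ≤ S N u := by
          refine Finset.sum_le_sum fun n _ => ?_
          exact mul_le_mul_of_nonneg_left (pow_le_pow_left₀ ht (le_of_lt hu) n) (ha n)
        exact pow_le_pow_left₀ (hSnonneg N) h1 2
      calc (S N t) ^ 2 * m
          ≤ ∫ u in Set.Ioi t, (S N u) ^ 2 ∂μ :=
            by have := setIntegral_ge_of_const_le measurableSet_Ioi hmtop hle (hS2int N).integrableOn; rw [smul_eq_mul, mul_comm] at this; exact this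
        _ ≤ ∫ u, (S N u) ^ 2 ∂μ :=
            setIntegral_le_integral (hS2int N) (Filter.Eventually.of_forall fun u => sq_nonneg _)
        _ ≤ C := hSC N
    have hC0 : 0 ≤ C := by have := key 0; simp [hS] at this; nlinarith
    refine summable_of_sum_range_le (fun n => mul_nonneg (ha n) (pow_nonneg ht n))
      (fun N => ?_) (c := Real.sqrt (C / m))
    show S N t ≤ Real.sqrt (C / m)
    rw [Real.le_sqrt (hSnonneg N) (div_nonneg hC0 hmpos.le)]
    rw [le_div_iff₀ hmpos]
    exact key N
  refine ⟨part1, ?_⟩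
  -- a.e., t is in the good set
  have hgood : ∀ᵐ t : ℝ ∂μ, 0 ≤ t ∧ (t : EReal) < s := by
    have hsub : {t : ℝ | ¬ (0 ≤ t ∧ (t : EReal) < s)} ⊆
        Set.Iio (0:ℝ) ∪ {t : ℝ | 0 ≤ t ∧ ¬ ((t : EReal) < s)} := by
      intro t ht
      simp only [Set.mem_setOf_eq, not_and] at ht
      by_cases h0 : 0 ≤ t
      · exact Or.inr ⟨h0, ht h0⟩
      · exact Or.inl (lt_of_not_ge h0)
    have : μ {t : ℝ | ¬ (0 ≤ t ∧ (t : EReal) < s)} = 0 :=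
      measure_mono_null hsub (le_antisymm
        ((measure_union_le _ _).trans (by rw [hsupp0, hμs]; simp)) zero_le) 
    exact this
  -- measurable representative of f
  set f' : ℝ → ℝ := hf.1.mk f with hf'def
  have hf'meas : StronglyMeasurable f' := hf.1.stronglyMeasurable_mk
  have hff' : f =ᵐ[μ] f' := hf.1.ae_eq_mk
  set g : ℝ → ℝ := fun t => ∑' n, a n * t ^ n with hg
  set F : ℕ → ℝ → ENNReal := fun N t => ENNReal.ofReal ((S N t - f' t) ^ 2) with hF
  have hFmeas : ∀ N, Measurable (F N) := fun N =>
    ENNReal.measurable_ofReal.comp (((hSmeas N).sub hf'meas.measurable).pow_const 2)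
  -- ∫⁻ F N → 0
  have hint_eq : ∀ N, ∫⁻ t, F N t ∂μ = ENNReal.ofReal (∫ t, (S N t - f t) ^ 2 ∂μ) := by
    intro N
    have h1 : ∫ t, (S N t - f t) ^ 2 ∂μ = ∫ t, (S N t - f' t) ^ 2 ∂μ :=
      integral_congr_ae (hff'.mono fun t ht => by dsimp only; rw [ht])
    have h2 : Integrable (fun t => (S N t - f' t) ^ 2) μ :=
      (hg2int N).congr (hff'.mono fun t ht => by dsimp only; rw [ht])
    rw [h1, ofReal_integral_eq_lintegral_ofReal h2
      (Filter.Eventually.of_forall fun t => sq_nonneg _)]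
  have hlin0 : Tendsto (fun N => ∫⁻ t, F N t ∂μ) atTop (nhds 0) := by
    have := (ENNReal.continuous_ofReal.tendsto 0).comp hconv
    simp only [Function.comp_def, ENNReal.ofReal_zero] at this
    simpa only [hint_eq] using this
  -- Fatou
  have hfatou : ∫⁻ t, Filter.liminf (fun N => F N t) atTop ∂μ = 0 := by
    refine le_antisymm ?_ zero_le
    calc ∫⁻ t, Filter.liminf (fun N => F N t) atTop ∂μ
        ≤ Filter.liminf (fun N => ∫⁻ t, F N t ∂μ) atTop :=
          lintegral_liminf_le' fun N => (hFmeas N).aemeasurable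
      _ = 0 := hlin0.liminf_eq
  have hliminf_meas : Measurable (fun t => Filter.liminf (fun N => F N t) atTop) :=
    Measurable.liminf fun N => hFmeas N
  have hlim0 : ∀ᵐ t ∂μ, Filter.liminf (fun N => F N t) atTop = 0 :=
    (lintegral_eq_zero_iff hliminf_meas).1 hfatou
  filter_upwards [hgood, hlim0, hff'] with t ⟨ht0, hts⟩ hlim heq _ _
  -- on the good set, S N t → g t
  have hsum := part1 t ht0 hts
  have htend : Tendsto (fun N => S N t) atTop (nhds (g t)) :=
    hsum.hasSum.tendsto_sum_nat
  have htendF : Tendsto (fun N => F N t) atTop (nhds (ENNReal.ofReal ((g t - f' t) ^ 2))) := by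
    apply ENNReal.continuous_ofReal.continuousAt.tendsto.comp
    exact ((htend.sub tendsto_const_nhds).pow 2)
  have : ENNReal.ofReal ((g t - f' t) ^ 2) = 0 := by
    rw [← htendF.liminf_eq]; exact hlim
  have hzero : (g t - f' t) ^ 2 ≤ 0 := by
    rwa [← ENNReal.ofReal_eq_zero]
  have : g t = f' t := by nlinarith [sq_nonneg (g t - f' t)]
  rw [heq, ← this]
end
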